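/- arXiv:1202.5908 — 2 statements merged into one kernel-verified Lean document; each statement's English description precedes it below -/
import Mathlib

section
/- There exists a constant C, independent of ε and N, such that ‖(E_1 − E_1^I)_x‖_{L^1(Ω_s)} ≤ C N^{1−5/2}, and likewise ‖∇(E_2 − E_2^I)‖_{L^1(Ω_s)} + ‖∇(E_12 − E_12^I)‖_{L^1(Ω_s)} ≤ C N^{1−5/2}, where gradients of the piecewise bilinear interpolants are taken rectangle-by-rectangle. -/
open MeasureTheory Real Set

noncomputable section

/-- First-order partial derivative in the x-direction. -/
def pdx (f : ℝ × ℝ → ℝ) : ℝ × ℝ → ℝ := fun p => fderiv ℝ f p (1, 0)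

/-- First-order partial derivative in the y-direction. -/
def pdy (f : ℝ × ℝ → ℝ) : ℝ × ℝ → ℝ := fun p => fderiv ℝ f p (0, 1)

/-- Mixed partial derivative `∂_x^i ∂_y^j`. -/
def pd (i j : ℕ) (f : ℝ × ℝ → ℝ) : ℝ × ℝ → ℝ := pdx^[i] (pdy^[j] f)

/-- A function coincides with a bilinear polynomial `a + bx + cy + dxy` on a set. -/
def IsBilinearOn (f : ℝ × ℝ → ℝ) (s : Set (ℝ × ℝ)) : Prop :=
  ∃ a b c d : ℝ, ∀ p ∈ s, f p = a + b * p.1 + c * p.2 + d * (p.1 * p.2)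

/-- The Shishkin-mesh node abscissas. -/
def meshX (N : ℕ) (lx : ℝ) (i : ℕ) : ℝ :=
  if i ≤ N / 2 then 2 * (i : ℝ) * (1 - lx) / (N : ℝ)
  else 1 - 2 * ((N : ℝ) - (i : ℝ)) * lx / (N : ℝ)

/-- The Shishkin-mesh node ordinates. -/
def meshY (N : ℕ) (ly : ℝ) (j : ℕ) : ℝ :=
  if j ≤ N / 3 then 3 * (j : ℝ) * ly / (N : ℝ)
  else if j ≤ 2 * N / 3 then
    (3 * (j : ℝ) / (N : ℝ) - 1) - 3 * (2 * (j : ℝ) - (N : ℝ)) * ly / (N : ℝ)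
  else 1 - 3 * ((N : ℝ) - (j : ℝ)) * ly / (N : ℝ)

/-- The mesh rectangle `τ_{ij} = [x_{i-1}, x_i] × [y_{j-1}, y_j]`. -/
def meshRect (N : ℕ) (lx ly : ℝ) (i j : ℕ) : Set (ℝ × ℝ) :=
  Icc (meshX N lx (i - 1)) (meshX N lx i) ×ˢ Icc (meshY N ly (j - 1)) (meshY N ly j)

def OmegaS (lx ly : ℝ) : Set (ℝ × ℝ) := Icc 0 (1 - lx) ×ˢ Icc ly (1 - ly)
def Omega1R (lx ly : ℝ) : Set (ℝ × ℝ) := Icc (1 - lx) 1 ×ˢ Icc ly (1 - ly)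
def Omega2R (lx ly : ℝ) : Set (ℝ × ℝ) := Icc 0 (1 - lx) ×ˢ (Icc 0 ly ∪ Icc (1 - ly) 1)
def Omega12R (lx ly : ℝ) : Set (ℝ × ℝ) := Icc (1 - lx) 1 ×ˢ (Icc 0 ly ∪ Icc (1 - ly) 1)

/-- Basic assumptions on the Shishkin mesh data (with `ρ = 2.5`). -/
def ShishkinHyp (N : ℕ) (ε β lx ly : ℝ) : Prop :=
  0 < N ∧ 6 ∣ N ∧ 0 < ε ∧ ε ≤ (N : ℝ)⁻¹ ∧ 0 < β ∧
  lx = 2.5 * ε / β * Real.log (N : ℝ) ∧ ly = 2.5 * Real.sqrt ε * Real.log (N : ℝ) ∧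
  lx ≤ 1 / 2 ∧ ly ≤ 1 / 4

/-- `gI` is the piecewise-bilinear nodal interpolant of `g` on the Shishkin mesh. -/
def IsMeshInterpolant (N : ℕ) (lx ly : ℝ) (g gI : ℝ × ℝ → ℝ) : Prop :=
  Continuous gI ∧
  (∀ i j : ℕ, 1 ≤ i → i ≤ N → 1 ≤ j → j ≤ N → IsBilinearOn gI (meshRect N lx ly i j)) ∧
  (∀ i j : ℕ, i ≤ N → j ≤ N →
    gI (meshX N lx i, meshY N ly j) = g (meshX N lx i, meshY N ly j))

def UnitSq : Set (ℝ × ℝ) := Icc 0 1 ×ˢ Icc 0 1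

/-- Bounds on the regular part `S` of the solution decomposition. -/
def BoundS (C0 : ℝ) (S : ℝ × ℝ → ℝ) : Prop :=
  ContDiff ℝ 3 S ∧ ∀ i j : ℕ, i + j ≤ 3 → ∀ p ∈ UnitSq, |pd i j S p| ≤ C0

/-- Bounds on the exponential-layer part `E₁`. -/
def BoundE1 (ε β C0 : ℝ) (E1 : ℝ × ℝ → ℝ) : Prop :=
  ContDiff ℝ 3 E1 ∧ ∀ i j : ℕ, i + j ≤ 3 → ∀ p ∈ UnitSq,
    |pd i j E1 p| ≤ C0 * ε ^ (-(i : ℝ)) * Real.exp (-β * (1 - p.1) / ε)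

/-- Bounds on the characteristic-layer part `E₂`. -/
def BoundE2 (ε C0 : ℝ) (E2 : ℝ × ℝ → ℝ) : Prop :=
  ContDiff ℝ 3 E2 ∧ ∀ i j : ℕ, i + j ≤ 3 → ∀ p ∈ UnitSq,
    |pd i j E2 p| ≤ C0 * ε ^ (-(j : ℝ) / 2) *
      (Real.exp (-p.2 / Real.sqrt ε) + Real.exp (-(1 - p.2) / Real.sqrt ε))

/-- Bounds on the corner-layer part `E₁₂`. -/
def BoundE12 (ε β C0 : ℝ) (E12 : ℝ × ℝ → ℝ) : Prop :=
  ContDiff ℝ 3 E12 ∧ ∀ i j : ℕ, i + j ≤ 3 → ∀ p ∈ UnitSq,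
    |pd i j E12 p| ≤ C0 * ε ^ (-((i : ℝ) + (j : ℝ) / 2)) * Real.exp (-β * (1 - p.1) / ε) *
      (Real.exp (-p.2 / Real.sqrt ε) + Real.exp (-(1 - p.2) / Real.sqrt ε))

/-- Membership in the bilinear finite element space `V^N`. -/
def MemVN (N : ℕ) (lx ly : ℝ) (v : ℝ × ℝ → ℝ) : Prop :=
  Continuous v ∧
  (∀ p ∈ UnitSq, (p.1 = 0 ∨ p.1 = 1 ∨ p.2 = 0 ∨ p.2 = 1) → v p = 0) ∧
  ∀ i j : ℕ, 1 ≤ i → i ≤ N → 1 ≤ j → j ≤ N → IsBilinearOn v (meshRect N lx ly i j)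

/-- The SDFEM stabilization parameter `δ`. -/
def sdDelta (N : ℕ) (lx ly Cstar : ℝ) : ℝ × ℝ → ℝ :=
  (OmegaS lx ly ∪ Omega2R lx ly).indicator fun _ => Cstar / (N : ℝ)

/-- The SDFEM bilinear form `B`. -/
def Bform (N : ℕ) (lx ly ε b c Cstar : ℝ) (v w : ℝ × ℝ → ℝ) : ℝ :=
  ∫ p in UnitSq,
    (ε * (pdx v p * pdx w p + pdy v p * pdy w p)
      + (b * pdx v p + c * v p) * w p
      + (b * pdx v p + c * v p) * (sdDelta N lx ly Cstar p * (b * pdx w p)))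

/-- The square of the SDFEM energy norm `|||·|||`. -/
def energySq (N : ℕ) (lx ly ε b c Cstar : ℝ) (v : ℝ × ℝ → ℝ) : ℝ :=
  ∫ p in UnitSq,
    ((ε + b ^ 2 * sdDelta N lx ly Cstar p) * pdx v p ^ 2
      + ε * pdy v p ^ 2 + c * v p ^ 2)

/-- The neighbourhood `Ω₀` of the point `(xs, ys)`. -/
def OmegaZero (N : ℕ) (xs ys K sx sy : ℝ) : Set (ℝ × ℝ) :=
  {p : ℝ × ℝ | p ∈ Ioo (0 : ℝ) 1 ×ˢ Ioo (0 : ℝ) 1 ∧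
    p.1 - xs ≤ K * sx * Real.log (N : ℝ) ∧ |p.2 - ys| ≤ K * sy * Real.log (N : ℝ)}

/-- `Ω₀'`: the smallest union of mesh rectangles containing `Ω₀`. -/
def OmegaZero' (N : ℕ) (lx ly xs ys K sx sy : ℝ) : Set (ℝ × ℝ) :=
  ⋃ i ∈ Finset.Icc 1 N, ⋃ j ∈ Finset.Icc 1 N,
    ⋃ (_ : volume (OmegaZero N xs ys K sx sy ∩ meshRect N lx ly i j) ≠ 0),
      meshRect N lx ly i j

section Helpers

open Filter

lemma bilin_deriv_bound {v : ℝ × ℝ → ℝ} {x0 x1 y0 y1 M H : ℝ}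
    (hx : x0 < x1) (hy : y0 < y1) (hHpos : 0 < H)
    (hxH : H⁻¹ ≤ x1 - x0) (hyH : H⁻¹ ≤ y1 - y0)
    (hbil : IsBilinearOn v (Icc x0 x1 ×ˢ Icc y0 y1))
    (h00 : |v (x0, y0)| ≤ M) (h10 : |v (x1, y0)| ≤ M)
    (h01 : |v (x0, y1)| ≤ M) (h11 : |v (x1, y1)| ≤ M)
    {p : ℝ × ℝ} (hp : p ∈ Ioo x0 x1 ×ˢ Ioo y0 y1) :
    DifferentiableAt ℝ v p ∧ |pdx v p| ≤ 8 * M * H ∧ |pdy v p| ≤ 8 * M * H := by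
  obtain ⟨a, b, c, d, hv⟩ := hbil
  have h12 : HasFDerivAt (fun q : ℝ × ℝ => q.1 * q.2)
      (p.1 • ContinuousLinearMap.snd ℝ ℝ ℝ + p.2 • ContinuousLinearMap.fst ℝ ℝ ℝ) p :=
    hasFDerivAt_fst.mul hasFDerivAt_snd
  have hfd : HasFDerivAt (fun q : ℝ × ℝ => a + b * q.1 + c * q.2 + d * (q.1 * q.2))
      ((((0 : ℝ × ℝ →L[ℝ] ℝ) + b • ContinuousLinearMap.fst ℝ ℝ ℝ)
          + c • ContinuousLinearMap.snd ℝ ℝ ℝ)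
        + d • (p.1 • ContinuousLinearMap.snd ℝ ℝ ℝ + p.2 • ContinuousLinearMap.fst ℝ ℝ ℝ)) p :=
    (((hasFDerivAt_const a p).add (hasFDerivAt_fst.const_mul b)).add
      (hasFDerivAt_snd.const_mul c)).add (h12.const_mul d)
  have hev : v =ᶠ[nhds p] (fun q : ℝ × ℝ => a + b * q.1 + c * q.2 + d * (q.1 * q.2)) :=
    Filter.eventuallyEq_of_mem ((isOpen_Ioo.prod isOpen_Ioo).mem_nhds hp)
      (fun q hq => hv q ⟨Ioo_subset_Icc_self hq.1, Ioo_subset_Icc_self hq.2⟩)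
  have hdiff : DifferentiableAt ℝ v p := hev.differentiableAt_iff.2 hfd.differentiableAt
  have hdx : pdx v p = b + d * p.2 := by
    show fderiv ℝ v p (1, 0) = _
    rw [hev.fderiv_eq, hfd.fderiv]
    simp
  have hdy : pdy v p = c + d * p.1 := by
    show fderiv ℝ v p (0, 1) = _
    rw [hev.fderiv_eq, hfd.fderiv]
    simp
  -- corner values
  have e00 : v (x0, y0) = a + b * x0 + c * y0 + d * (x0 * y0) :=
    hv _ ⟨⟨le_refl _, hx.le⟩, ⟨le_refl _, hy.le⟩⟩
  have e10 : v (x1, y0) = a + b * x1 + c * y0 + d * (x1 * y0) :=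
    hv _ ⟨⟨hx.le, le_refl _⟩, ⟨le_refl _, hy.le⟩⟩
  have e01 : v (x0, y1) = a + b * x0 + c * y1 + d * (x0 * y1) :=
    hv _ ⟨⟨le_refl _, hx.le⟩, ⟨hy.le, le_refl _⟩⟩
  have e11 : v (x1, y1) = a + b * x1 + c * y1 + d * (x1 * y1) :=
    hv _ ⟨⟨hx.le, le_refl _⟩, ⟨hy.le, le_refl _⟩⟩
  have hM0 : 0 ≤ M := le_trans (abs_nonneg _) h00
  have hxpos : 0 < x1 - x0 := by linarith
  have hypos : 0 < y1 - y0 := by linarith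
  have hxinv : (x1 - x0)⁻¹ ≤ H := by
    rw [inv_le_comm₀ hxpos hHpos] at *
    exact hxH
  have hyinv : (y1 - y0)⁻¹ ≤ H := by
    rw [inv_le_comm₀ hypos hHpos] at *
    exact hyH
  have key : ∀ u0 u1 : ℝ, |u0| ≤ M → |u1| ≤ M → (x1 - x0)⁻¹ ≤ H → |u1 - u0| / (x1 - x0) ≤ 2 * M * H := by
    intro u0 u1 hu0 hu1 hinv
    have h1 : |u1 - u0| ≤ 2 * M := by
      calc |u1 - u0| ≤ |u1| + |u0| := abs_sub _ _
      _ ≤ 2 * M := by linarith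
    rw [div_eq_mul_inv]
    calc |u1 - u0| * (x1 - x0)⁻¹ ≤ (2 * M) * H := by
          apply mul_le_mul h1 hinv (inv_nonneg.2 hxpos.le) (by linarith)
    _ = 2 * M * H := rfl
  -- bounds for edge slopes in x
  have hb0 : b + d * y0 = (v (x1, y0) - v (x0, y0)) / (x1 - x0) := by
    rw [e10, e00]; field_simp; ring
  have hb1 : b + d * y1 = (v (x1, y1) - v (x0, y1)) / (x1 - x0) := by
    rw [e11, e01]; field_simp; ring
  have hB0 : |b + d * y0| ≤ 2 * M * H := by
    rw [hb0, abs_div, abs_of_pos hxpos]; exact key _ _ h00 h10 hxinv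
  have hB1 : |b + d * y1| ≤ 2 * M * H := by
    rw [hb1, abs_div, abs_of_pos hxpos]; exact key _ _ h01 h11 hxinv
  -- similarly in y
  have keyy : ∀ u0 u1 : ℝ, |u0| ≤ M → |u1| ≤ M → |u1 - u0| / (y1 - y0) ≤ 2 * M * H := by
    intro u0 u1 hu0 hu1
    have h1 : |u1 - u0| ≤ 2 * M := by
      calc |u1 - u0| ≤ |u1| + |u0| := abs_sub _ _
      _ ≤ 2 * M := by linarith
    rw [div_eq_mul_inv]
    calc |u1 - u0| * (y1 - y0)⁻¹ ≤ (2 * M) * H := by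
          apply mul_le_mul h1 hyinv (inv_nonneg.2 hypos.le) (by linarith)
    _ = 2 * M * H := rfl
  have hc0 : c + d * x0 = (v (x0, y1) - v (x0, y0)) / (y1 - y0) := by
    rw [e01, e00]; field_simp; ring
  have hc1 : c + d * x1 = (v (x1, y1) - v (x1, y0)) / (y1 - y0) := by
    rw [e11, e10]; field_simp; ring
  have hC0 : |c + d * x0| ≤ 2 * M * H := by
    rw [hc0, abs_div, abs_of_pos hypos]; exact keyy _ _ h00 h01
  have hC1 : |c + d * x1| ≤ 2 * M * H := by
    rw [hc1, abs_div, abs_of_pos hypos]; exact keyy _ _ h10 h11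
  have hMH : (0:ℝ) ≤ M * H := mul_nonneg hM0 hHpos.le
  refine ⟨hdiff, ?_, ?_⟩
  · rw [hdx]
    have hmid : |b + d * p.2| ≤ |b + d * y0| + |(b + d * y1) - (b + d * y0)| := by
      have h1 : |d * (p.2 - y0)| ≤ |d * (y1 - y0)| := by
        rw [abs_mul, abs_mul]
        apply mul_le_mul_of_nonneg_left _ (abs_nonneg d)
        rw [abs_of_nonneg (by linarith [hp.2.1] : (0:ℝ) ≤ p.2 - y0),
          abs_of_nonneg (by linarith : (0:ℝ) ≤ y1 - y0)]
        linarith [hp.2.2]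
      calc |b + d * p.2| = |(b + d * y0) + d * (p.2 - y0)| := by ring_nf
      _ ≤ |b + d * y0| + |d * (p.2 - y0)| := abs_add_le _ _
      _ ≤ |b + d * y0| + |d * (y1 - y0)| := by linarith
      _ = |b + d * y0| + |(b + d * y1) - (b + d * y0)| := by ring_nf
    have : |(b + d * y1) - (b + d * y0)| ≤ 4 * M * H := by
      calc |(b + d * y1) - (b + d * y0)| ≤ |b + d * y1| + |b + d * y0| := abs_sub _ _
      _ ≤ 4 * M * H := by linarith
    linarith
  · rw [hdy]
    have hmid : |c + d * p.1| ≤ |c + d * x0| + |(c + d * x1) - (c + d * x0)| := by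
      have h1 : |d * (p.1 - x0)| ≤ |d * (x1 - x0)| := by
        rw [abs_mul, abs_mul]
        apply mul_le_mul_of_nonneg_left _ (abs_nonneg d)
        rw [abs_of_nonneg (by linarith [hp.1.1] : (0:ℝ) ≤ p.1 - x0),
          abs_of_nonneg (by linarith : (0:ℝ) ≤ x1 - x0)]
        linarith [hp.1.2]
      calc |c + d * p.1| = |(c + d * x0) + d * (p.1 - x0)| := by ring_nf
      _ ≤ |c + d * x0| + |d * (p.1 - x0)| := abs_add_le _ _
      _ ≤ |c + d * x0| + |d * (x1 - x0)| := by linarith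
      _ = |c + d * x0| + |(c + d * x1) - (c + d * x0)| := by ring_nf
    have : |(c + d * x1) - (c + d * x0)| ≤ 4 * M * H := by
      calc |(c + d * x1) - (c + d * x0)| ≤ |c + d * x1| + |c + d * x0| := abs_sub _ _
      _ ≤ 4 * M * H := by linarith
    linarith

lemma meshX_coarse (m : ℕ) (hm : 0 < m) (lx : ℝ) {i : ℕ} (hi : i ≤ 3 * m) :
    meshX (6 * m) lx i = (i : ℝ) * (1 - lx) / (3 * m) := by
  unfold meshX
  rw [if_pos (by omega : i ≤ 6 * m / 2)]
  have hm' : ((m : ℝ)) ≠ 0 := Nat.cast_ne_zero.2 hm.ne'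
  push_cast
  field_simp
  ring

lemma meshY_mid (m : ℕ) (hm : 0 < m) (ly : ℝ) {j : ℕ} (h1 : 2 * m ≤ j) (h2 : j ≤ 4 * m) :
    meshY (6 * m) ly j = ly + (((j : ℝ) - 2 * m) / (2 * m)) * (1 - 2 * ly) := by
  unfold meshY
  have hm' : ((m : ℝ)) ≠ 0 := Nat.cast_ne_zero.2 hm.ne'
  by_cases hj : j ≤ 6 * m / 3
  · have hj' : j = 2 * m := by omega
    rw [if_pos hj, hj']
    push_cast
    field_simp
    ring
  · rw [if_neg hj, if_pos (by omega : j ≤ 2 * (6 * m) / 3)]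
    push_cast
    field_simp
    ring

lemma volume_vline (c : ℝ) : volume {p : ℝ × ℝ | p.1 = c} = 0 := by
  have h : {p : ℝ × ℝ | p.1 = c} = ({c} : Set ℝ) ×ˢ (univ : Set ℝ) := by
    ext ⟨a, b⟩; simp [eq_comm]
  rw [h, Measure.volume_eq_prod, Measure.prod_prod]
  simp

lemma volume_hline (c : ℝ) : volume {p : ℝ × ℝ | p.2 = c} = 0 := by
  have h : {p : ℝ × ℝ | p.2 = c} = (univ : Set ℝ) ×ˢ ({c} : Set ℝ) := by
    ext ⟨a, b⟩; simp [eq_comm]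
  rw [h, Measure.volume_eq_prod, Measure.prod_prod]
  simp

lemma null_grid (N : ℕ) (lx ly : ℝ) :
    volume ({p : ℝ × ℝ | ∃ i ≤ N, p.1 = meshX N lx i} ∪
      {p : ℝ × ℝ | ∃ j ≤ N, p.2 = meshY N ly j}) = 0 := by
  apply measure_union_null
  · refine measure_mono_null (fun p hp => ?_)
      (measure_iUnion_null (fun i : ℕ => volume_vline (meshX N lx i)))
    obtain ⟨i, _, hi⟩ := hp
    exact mem_iUnion.2 ⟨i, hi⟩
  · refine measure_mono_null (fun p hp => ?_)
      (measure_iUnion_null (fun j : ℕ => volume_hline (meshY N ly j)))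
    obtain ⟨j, _, hj⟩ := hp
    exact mem_iUnion.2 ⟨j, hj⟩

lemma exp_int_x {ε βp : ℝ} (hε : 0 < ε) (hβ : 0 < βp) {a b : ℝ} (hab : a ≤ b) :
    ∫ x in Icc a b, ε⁻¹ * Real.exp (βp * (x - 1) / ε)
      ≤ βp⁻¹ * Real.exp (βp * (b - 1) / ε) := by
  rw [MeasureTheory.integral_Icc_eq_integral_Ioc, ← intervalIntegral.integral_of_le hab]
  have hder : ∀ x ∈ uIcc a b,
      HasDerivAt (fun x => βp⁻¹ * Real.exp (βp * (x - 1) / ε))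
        (ε⁻¹ * Real.exp (βp * (x - 1) / ε)) x := by
    intro x _
    have h1 : HasDerivAt (fun x : ℝ => βp * (x - 1) / ε) (βp / ε) x := by
      simpa using (((hasDerivAt_id x).sub_const 1).const_mul βp).div_const ε
    have h2 := (h1.exp).const_mul βp⁻¹
    refine h2.congr_deriv ?_
    field_simp
  rw [intervalIntegral.integral_eq_sub_of_hasDerivAt hder
    ((Continuous.intervalIntegrable (by continuity) a b))]
  have : (0:ℝ) ≤ βp⁻¹ * Real.exp (βp * (a - 1) / ε) := by positivity
  linarith

lemma exp_int_y {s : ℝ} (hs : 0 < s) {a b : ℝ} (hab : a ≤ b) :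
    ∫ y in Icc a b, s⁻¹ * (Real.exp (-y / s) + Real.exp (-(1 - y) / s))
      ≤ Real.exp (-a / s) + Real.exp (-(1 - b) / s) := by
  rw [MeasureTheory.integral_Icc_eq_integral_Ioc, ← intervalIntegral.integral_of_le hab]
  have hder : ∀ y ∈ uIcc a b,
      HasDerivAt (fun y => Real.exp (-(1 - y) / s) - Real.exp (-y / s))
        (s⁻¹ * (Real.exp (-y / s) + Real.exp (-(1 - y) / s))) y := by
    intro y _
    have h1 : HasDerivAt (fun y : ℝ => -(1 - y) / s) (s⁻¹) y := by
      have : HasDerivAt (fun y : ℝ => -(1 - y) / s) (1 / s) y := by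
        simpa using (((hasDerivAt_id y).const_sub 1).neg.div_const s)
      simpa [one_div] using this
    have h2 : HasDerivAt (fun y : ℝ => -y / s) (-s⁻¹) y := by
      have : HasDerivAt (fun y : ℝ => -y / s) (-1 / s) y := by
        simpa using ((hasDerivAt_id y).neg.div_const s)
      simpa [neg_div, one_div] using this
    have := (h1.exp).sub (h2.exp)
    refine this.congr_deriv ?_
    ring
  rw [intervalIntegral.integral_eq_sub_of_hasDerivAt hder
    ((Continuous.intervalIntegrable (by continuity) a b))]
  have e1 : (0:ℝ) < Real.exp (-b / s) := Real.exp_pos _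
  have e2 : (0:ℝ) < Real.exp (-(1 - a) / s) := Real.exp_pos _
  linarith

lemma integral_le_of_ae_bound {s : Set (ℝ × ℝ)} (hs : MeasurableSet s) (hc : IsCompact s)
    {G φ : ℝ × ℝ → ℝ} (hG0 : ∀ p, 0 ≤ G p) (hφ : Continuous φ) (hφ0 : ∀ p, 0 ≤ φ p)
    (hb : ∀ᵐ p, p ∈ s → G p ≤ φ p) :
    ∫ p in s, G p ≤ ∫ p in s, φ p := by
  by_cases hint : IntegrableOn G s
  · exact integral_mono_ae hint (hφ.continuousOn.integrableOn_compact hc)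
      ((ae_restrict_iff' hs).2 hb)
  · rw [MeasureTheory.integral_undef hint]
    exact setIntegral_nonneg hs (fun p _ => hφ0 p)

lemma prod_integral_bound {a1 b1 a2 b2 K : ℝ} (h1 : a1 ≤ b1) (h2 : a2 ≤ b2)
    (hw1 : b1 - a1 ≤ 1) (hw2 : b2 - a2 ≤ 1) (hK : 0 ≤ K)
    {u w : ℝ → ℝ} (hu : Continuous u) (hw : Continuous w)
    (hu0 : ∀ x, 0 ≤ u x) (hw0 : ∀ x, 0 ≤ w x) :
    ∫ p in Icc a1 b1 ×ˢ Icc a2 b2, (u p.1 + w p.2 + K)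
      ≤ (∫ x in Icc a1 b1, u x) + (∫ y in Icc a2 b2, w y) + K := by
  have hcomp : IsCompact (Icc a1 b1 ×ˢ Icc a2 b2) := isCompact_Icc.prod isCompact_Icc
  have hvol1 : (volume (Icc a1 b1)).toReal = b1 - a1 := by
    rw [Real.volume_Icc, ENNReal.toReal_ofReal (by linarith)]
  have hvol2 : (volume (Icc a2 b2)).toReal = b2 - a2 := by
    rw [Real.volume_Icc, ENNReal.toReal_ofReal (by linarith)]
  have hiu : IntegrableOn (fun p : ℝ × ℝ => u p.1) (Icc a1 b1 ×ˢ Icc a2 b2) :=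
    ((hu.comp continuous_fst).continuousOn).integrableOn_compact hcomp
  have hiw : IntegrableOn (fun p : ℝ × ℝ => w p.2) (Icc a1 b1 ×ˢ Icc a2 b2) :=
    ((hw.comp continuous_snd).continuousOn).integrableOn_compact hcomp
  have hiK : IntegrableOn (fun _ : ℝ × ℝ => K) (Icc a1 b1 ×ˢ Icc a2 b2) :=
    integrableOn_const hcomp.measure_lt_top.ne
  have hiuw : IntegrableOn (fun p : ℝ × ℝ => u p.1 + w p.2) (Icc a1 b1 ×ˢ Icc a2 b2) := by
    exact hiu.add hiw
  have hsplit : ∫ p in Icc a1 b1 ×ˢ Icc a2 b2, (u p.1 + w p.2 + K)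
      = (∫ p in Icc a1 b1 ×ˢ Icc a2 b2, u p.1) + (∫ p in Icc a1 b1 ×ˢ Icc a2 b2, w p.2)
        + ∫ _ in Icc a1 b1 ×ˢ Icc a2 b2, K := by
    rw [MeasureTheory.integral_add hiuw hiK, MeasureTheory.integral_add hiu hiw]
  rw [hsplit]
  have hu1 : ∫ p in Icc a1 b1 ×ˢ Icc a2 b2, u p.1 = (∫ x in Icc a1 b1, u x) * (b2 - a2) := by
    have := MeasureTheory.setIntegral_prod_mul (μ := (volume : Measure ℝ))
      (ν := (volume : Measure ℝ)) u (fun _ => (1:ℝ)) (Icc a1 b1) (Icc a2 b2)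
    simp only [mul_one] at this
    rw [Measure.volume_eq_prod, this, MeasureTheory.integral_const,
      measureReal_restrict_apply_univ, measureReal_def, smul_eq_mul, mul_one, hvol2]
  have hw1' : ∫ p in Icc a1 b1 ×ˢ Icc a2 b2, w p.2 = (∫ y in Icc a2 b2, w y) * (b1 - a1) := by
    have := MeasureTheory.setIntegral_prod_mul (μ := (volume : Measure ℝ))
      (ν := (volume : Measure ℝ)) (fun _ => (1:ℝ)) w (Icc a1 b1) (Icc a2 b2)
    simp only [one_mul] at this
    rw [Measure.volume_eq_prod, this, MeasureTheory.integral_const,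
      measureReal_restrict_apply_univ, measureReal_def, smul_eq_mul, mul_one, hvol1, mul_comm]
  have hKint : ∫ _ in Icc a1 b1 ×ˢ Icc a2 b2, K ≤ K := by
    rw [MeasureTheory.integral_const]
    have hvol : (volume (Icc a1 b1 ×ˢ Icc a2 b2)).toReal = (b1 - a1) * (b2 - a2) := by
      rw [Measure.volume_eq_prod, Measure.prod_prod, Real.volume_Icc, Real.volume_Icc,
        ← ENNReal.ofReal_mul (by linarith), ENNReal.toReal_ofReal
        (mul_nonneg (by linarith) (by linarith))]
    rw [measureReal_restrict_apply_univ, measureReal_def, hvol, smul_eq_mul]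
    have hAB : (b1 - a1) * (b2 - a2) ≤ 1 := by
      nlinarith [mul_nonneg (sub_nonneg.2 h1) (sub_nonneg.2 h2)]
    nlinarith [mul_nonneg (sub_nonneg.2 hAB) hK]
  have hIu0 : 0 ≤ ∫ x in Icc a1 b1, u x := setIntegral_nonneg measurableSet_Icc (fun x _ => hu0 x)
  have hIw0 : 0 ≤ ∫ y in Icc a2 b2, w y := setIntegral_nonneg measurableSet_Icc (fun y _ => hw0 y)
  rw [hu1, hw1']
  nlinarith [mul_nonneg hIu0 (sub_nonneg.2 h2), mul_nonneg hIw0 (sub_nonneg.2 h1)]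

lemma interp_ae (m : ℕ) (hm : 0 < m) {lx ly : ℝ}
    (hlx0 : 0 ≤ lx) (hlxh : lx ≤ 1 / 2) (hly0 : 0 ≤ ly) (hlyh : ly ≤ 1 / 4)
    {g gI : ℝ × ℝ → ℝ} (hI : IsMeshInterpolant (6 * m) lx ly g gI)
    {M : ℝ}
    (hg : ∀ i j : ℕ, i ≤ 3 * m → 2 * m ≤ j → j ≤ 4 * m →
      |g (meshX (6 * m) lx i, meshY (6 * m) ly j)| ≤ M) :
    ∀ᵐ p, p ∈ OmegaS lx ly →
      DifferentiableAt ℝ gI p ∧ |pdx gI p| ≤ 8 * M * (6 * m) ∧ |pdy gI p| ≤ 8 * M * (6 * m) := by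
  classical
  have hnull := null_grid (6 * m) lx ly
  filter_upwards [measure_eq_zero_iff_ae_notMem.1 hnull] with p hp hpΩ
  have hgx : ∀ i ≤ 6 * m, p.1 ≠ meshX (6 * m) lx i :=
    fun i hi he => hp (Set.mem_union_left _ ⟨i, hi, he⟩)
  have hgy' : ∀ j ≤ 6 * m, p.2 ≠ meshY (6 * m) ly j :=
    fun j hj he => hp (Set.mem_union_right _ ⟨j, hj, he⟩)
  rw [OmegaS, Set.mem_prod] at hpΩ
  obtain ⟨hp1, hp2⟩ := hpΩ
  have hmR : (0:ℝ) < m := by exact_mod_cast hm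
  have hx_top : meshX (6 * m) lx (3 * m) = 1 - lx := by
    rw [meshX_coarse m hm lx (le_refl _)]
    push_cast
    field_simp
  have hx_0 : meshX (6 * m) lx 0 = 0 := by
    rw [meshX_coarse m hm lx (by omega)]; simp
  have hPex : ∃ i, i ≤ 3 * m ∧ p.1 < meshX (6 * m) lx i := by
    refine ⟨3 * m, le_refl _, lt_of_le_of_ne ?_ ?_⟩
    · rw [hx_top]; exact hp1.2
    · exact hgx (3 * m) (by omega)
  set i0 := Nat.find hPex with hi0def
  obtain ⟨hi0le, hi0lt⟩ := Nat.find_spec hPex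
  rw [← hi0def] at hi0le hi0lt
  have hi0pos : 0 < i0 := by
    by_contra h
    push_neg at h
    have h0 : i0 = 0 := by omega
    rw [h0, hx_0] at hi0lt
    linarith [hp1.1]
  have hlow_le : meshX (6 * m) lx (i0 - 1) ≤ p.1 := by
    by_contra hcon
    push_neg at hcon
    exact Nat.find_min hPex (show i0 - 1 < i0 by omega) ⟨by omega, hcon⟩
  have hlow : meshX (6 * m) lx (i0 - 1) < p.1 :=
    lt_of_le_of_ne hlow_le (fun he => hgx (i0 - 1) (by omega) he.symm)
  have hy_2m : meshY (6 * m) ly (2 * m) = ly := by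
    rw [meshY_mid m hm ly (le_refl _) (by omega)]
    push_cast
    ring
  have hy_4m : meshY (6 * m) ly (4 * m) = 1 - ly := by
    rw [meshY_mid m hm ly (by omega) (le_refl _)]
    push_cast
    field_simp
    ring
  have hQex : ∃ j, (2 * m < j ∧ j ≤ 4 * m) ∧ p.2 < meshY (6 * m) ly j := by
    refine ⟨4 * m, ⟨by omega, le_refl _⟩, lt_of_le_of_ne ?_ ?_⟩
    · rw [hy_4m]; exact hp2.2
    · exact hgy' (4 * m) (by omega)
  set j0 := Nat.find hQex with hj0def
  obtain ⟨⟨hj0gt, hj0le⟩, hj0lt⟩ := Nat.find_spec hQex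
  rw [← hj0def] at hj0gt hj0le hj0lt
  have hjlow_le : meshY (6 * m) ly (j0 - 1) ≤ p.2 := by
    by_cases hcase : j0 = 2 * m + 1
    · rw [hcase, show (2 * m + 1) - 1 = 2 * m from rfl, hy_2m]
      exact hp2.1
    · by_contra hcon
      push_neg at hcon
      exact Nat.find_min hQex (show j0 - 1 < j0 by omega) ⟨⟨by omega, by omega⟩, hcon⟩
  have hjlow : meshY (6 * m) ly (j0 - 1) < p.2 :=
    lt_of_le_of_ne hjlow_le (fun he => hgy' (j0 - 1) (by omega) he.symm)
  -- mesh widths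
  have hstepx : meshX (6 * m) lx i0 - meshX (6 * m) lx (i0 - 1) = (1 - lx) / (3 * m) := by
    rw [meshX_coarse m hm lx hi0le, meshX_coarse m hm lx (by omega : i0 - 1 ≤ 3 * m),
      Nat.cast_sub (by omega : 1 ≤ i0)]
    push_cast
    field_simp
    ring
  have hstepy : meshY (6 * m) ly j0 - meshY (6 * m) ly (j0 - 1) = (1 - 2 * ly) / (2 * m) := by
    rw [meshY_mid m hm ly (by omega) hj0le, meshY_mid m hm ly (by omega) (by omega),
      Nat.cast_sub (by omega : 1 ≤ j0)]
    push_cast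
    field_simp
    ring
  have hHx : ((6:ℝ) * m)⁻¹ ≤ meshX (6 * m) lx i0 - meshX (6 * m) lx (i0 - 1) := by
    rw [hstepx, inv_eq_one_div, div_le_div_iff₀ (by linarith) (by linarith)]
    nlinarith
  have hHy : ((6:ℝ) * m)⁻¹ ≤ meshY (6 * m) ly j0 - meshY (6 * m) ly (j0 - 1) := by
    rw [hstepy, inv_eq_one_div, div_le_div_iff₀ (by linarith) (by linarith)]
    nlinarith
  have hxlt : meshX (6 * m) lx (i0 - 1) < meshX (6 * m) lx i0 := by
    have h6 : (0:ℝ) < ((6:ℝ) * m)⁻¹ := by positivity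
    linarith
  have hylt : meshY (6 * m) ly (j0 - 1) < meshY (6 * m) ly j0 := by
    have h6 : (0:ℝ) < ((6:ℝ) * m)⁻¹ := by positivity
    linarith
  have hbil : IsBilinearOn gI
      (Icc (meshX (6 * m) lx (i0 - 1)) (meshX (6 * m) lx i0) ×ˢ
        Icc (meshY (6 * m) ly (j0 - 1)) (meshY (6 * m) ly j0)) :=
    hI.2.1 i0 j0 hi0pos (by omega) (by omega) (by omega)
  have hcorner : ∀ i j : ℕ, i ≤ 3 * m → 2 * m ≤ j → j ≤ 4 * m →
      |gI (meshX (6 * m) lx i, meshY (6 * m) ly j)| ≤ M := by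
    intro i j hi hj1 hj2
    rw [hI.2.2 i j (by omega) (by omega)]
    exact hg i j hi hj1 hj2
  have hres := bilin_deriv_bound hxlt hylt (by linarith : (0:ℝ) < 6 * m) hHx hHy hbil
    (hcorner (i0 - 1) (j0 - 1) (by omega) (by omega) (by omega))
    (hcorner i0 (j0 - 1) (by omega) (by omega) (by omega))
    (hcorner (i0 - 1) j0 (by omega) (by omega) (by omega))
    (hcorner i0 j0 (by omega) (by omega) (by omega))
    (Set.mem_prod.2 ⟨⟨hlow, hi0lt⟩, ⟨hjlow, hj0lt⟩⟩)
  exact hres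

lemma mesh_node_mem (m : ℕ) (hm : 0 < m) {lx ly : ℝ}
    (hlxh : lx ≤ 1) (hly0 : 0 ≤ ly) (hlyh : ly ≤ 1 / 4)
    {i j : ℕ} (hi : i ≤ 3 * m) (hj1 : 2 * m ≤ j) (hj2 : j ≤ 4 * m) :
    meshX (6 * m) lx i ∈ Icc (0:ℝ) (1 - lx) ∧ meshY (6 * m) ly j ∈ Icc ly (1 - ly) := by
  have hmR : (0:ℝ) < m := by exact_mod_cast hm
  have hiR : (i:ℝ) ≤ 3 * m := by exact_mod_cast hi
  have hjR1 : (2:ℝ) * m ≤ j := by exact_mod_cast hj1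
  have hjR2 : (j:ℝ) ≤ 4 * m := by exact_mod_cast hj2
  constructor
  · rw [meshX_coarse m hm lx hi]
    constructor
    · exact div_nonneg (mul_nonneg (by positivity : (0:ℝ) ≤ (i:ℝ)) (by linarith)) (by linarith)
    · rw [div_le_iff₀ (by linarith)]
      nlinarith [(by positivity : (0:ℝ) ≤ (i:ℝ))]
  · rw [meshY_mid m hm ly hj1 hj2]
    have ht0 : (0:ℝ) ≤ ((j:ℝ) - 2 * m) / (2 * m) := div_nonneg (by linarith) (by linarith)
    have ht1 : ((j:ℝ) - 2 * m) / (2 * m) ≤ 1 := by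
      rw [div_le_one (by linarith)]; linarith
    constructor
    · nlinarith [mul_nonneg ht0 (by linarith : (0:ℝ) ≤ 1 - 2 * ly)]
    · nlinarith [mul_nonneg (sub_nonneg.2 ht1) (by linarith : (0:ℝ) ≤ 1 - 2 * ly)]

end Helpers

set_option maxHeartbeats 4000000 in
/-- `‖(E₁ − E₁^I)_x‖_{L^1(Ω_s)} ≤ C N^{1−5/2}` and
`‖∇(E₂ − E₂^I)‖_{L^1(Ω_s)} + ‖∇(E₁₂ − E₁₂^I)‖_{L^1(Ω_s)} ≤ C N^{1−5/2}`, with derivatives of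
the piecewise bilinear interpolants taken rectangle-by-rectangle. -/
theorem layer_grad_L1_OmegaS (β C0 : ℝ) (hβ : 0 < β) (hC0 : 0 < C0) :
    ∃ C : ℝ, 0 < C ∧
      ∀ (N : ℕ) (ε lx ly : ℝ) (E1 E2 E12 EI1 EI2 EI12 : ℝ × ℝ → ℝ),
        ShishkinHyp N ε β lx ly →
        BoundE1 ε β C0 E1 → BoundE2 ε C0 E2 → BoundE12 ε β C0 E12 →
        IsMeshInterpolant N lx ly E1 EI1 →
        IsMeshInterpolant N lx ly E2 EI2 →
        IsMeshInterpolant N lx ly E12 EI12 →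
        (∫ p in OmegaS lx ly, |pdx (fun q => E1 q - EI1 q) p|
          ≤ C * (N : ℝ) ^ ((1 : ℝ) - 5 / 2)) ∧
        ((∫ p in OmegaS lx ly,
            (|pdx (fun q => E2 q - EI2 q) p| + |pdy (fun q => E2 q - EI2 q) p|))
          + (∫ p in OmegaS lx ly,
            (|pdx (fun q => E12 q - EI12 q) p| + |pdy (fun q => E12 q - EI12 q) p|))
          ≤ C * (N : ℝ) ^ ((1 : ℝ) - 5 / 2)) := by
  have hbinv : (0:ℝ) < β⁻¹ := inv_pos.2 hβ
  refine ⟨C0 * (3 * β⁻¹ + 200) + 1, by nlinarith [mul_pos hC0 hbinv], ?_⟩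
  intro N ε lx ly E1 E2 E12 EI1 EI2 EI12 hyp hE1 hE2 hE12 hI1 hI2 hI12
  obtain ⟨hN, hdvd, hε, hεN, hβ2, hlx, hly, hlxh, hlyh⟩ := hyp
  obtain ⟨m, rfl⟩ := hdvd
  have hm : 0 < m := by omega
  have hmR : (0:ℝ) < m := by exact_mod_cast hm
  set NR : ℝ := ((6 * m : ℕ) : ℝ) with hNRdef
  have hNR6 : NR = 6 * (m:ℝ) := by rw [hNRdef]; push_cast; ring
  have hNRpos : (0:ℝ) < NR := by rw [hNR6]; linarith
  have hm1 : (1:ℝ) ≤ (m:ℝ) := by exact_mod_cast hm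
  have hNR1 : (1:ℝ) ≤ NR := by rw [hNR6]; linarith
  have hlogpos : 0 < Real.log NR := Real.log_pos (by rw [hNR6]; linarith)
  set X : ℝ := NR ^ ((1:ℝ) - 5 / 2) with hXdef
  have hXpos : 0 < X := Real.rpow_pos_of_pos hNRpos _
  set R : ℝ := NR ^ (-(5:ℝ)/2) with hRdef
  have hRpos : 0 < R := Real.rpow_pos_of_pos hNRpos _
  have hRX : R ≤ X := Real.rpow_le_rpow_of_exponent_le hNR1 (by norm_num)
  have hRNX : R * NR = X := by
    have h := Real.rpow_add hNRpos (-(5:ℝ)/2) 1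
    rw [Real.rpow_one] at h
    rw [hRdef, hXdef, ← h]
    norm_num
  have hsε : 0 < Real.sqrt ε := Real.sqrt_pos.2 hε
  have hlxpos : 0 < lx := by
    rw [hlx]
    have h1 : 0 < 2.5 * ε / β := by positivity
    exact mul_pos h1 hlogpos
  have hlypos : 0 < ly := by
    rw [hly]
    have h1 : 0 < 2.5 * Real.sqrt ε := by positivity
    exact mul_pos h1 hlogpos
  have hexlx : Real.exp (-(β * lx) / ε) = R := by
    rw [hlx]
    have harg : -(β * (2.5 * ε / β * Real.log NR)) / ε = Real.log NR * (-(5:ℝ)/2) := by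
      field_simp
      ring
    rw [harg, hRdef, Real.rpow_def_of_pos hNRpos]
  have hexly : Real.exp (-ly / Real.sqrt ε) = R := by
    rw [hly]
    have harg : -(2.5 * Real.sqrt ε * Real.log NR) / Real.sqrt ε
        = Real.log NR * (-(5:ℝ)/2) := by
      field_simp
      ring
    rw [harg, hRdef, Real.rpow_def_of_pos hNRpos]
  have hΩmeas : MeasurableSet (OmegaS lx ly) := measurableSet_Icc.prod measurableSet_Icc
  have hΩcomp : IsCompact (OmegaS lx ly) := isCompact_Icc.prod isCompact_Icc
  have hsub : OmegaS lx ly ⊆ UnitSq := by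
    rintro p ⟨hx, hy⟩
    exact ⟨⟨hx.1, hx.2.trans (by linarith)⟩,
      ⟨le_trans hlypos.le hy.1, hy.2.trans (by linarith)⟩⟩
  have pd10 : ∀ f : ℝ × ℝ → ℝ, pd 1 0 f = pdx f := fun f => rfl
  have pd01 : ∀ f : ℝ × ℝ → ℝ, pd 0 1 f = pdy f := fun f => rfl
  have pd00 : ∀ f : ℝ × ℝ → ℝ, pd 0 0 f = f := fun f => rfl
  -- node membership in the unit square
  have hnodeUS : ∀ i j : ℕ, i ≤ 3 * m → 2 * m ≤ j → j ≤ 4 * m →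
      (meshX (6 * m) lx i, meshY (6 * m) ly j) ∈ UnitSq ∧
        meshX (6 * m) lx i ≤ 1 - lx ∧ ly ≤ meshY (6 * m) ly j ∧
        meshY (6 * m) ly j ≤ 1 - ly := by
    intro i j hi hj1 hj2
    obtain ⟨hxm, hym⟩ := mesh_node_mem m hm (le_trans hlxh (by norm_num)) hlypos.le hlyh hi hj1 hj2
    exact ⟨⟨⟨hxm.1, hxm.2.trans (by linarith)⟩,
      ⟨le_trans hlypos.le hym.1, hym.2.trans (by linarith)⟩⟩, hxm.2, hym.1, hym.2⟩
  -- the exponential decay factors, bounded on the strip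
  have hxfac : ∀ x : ℝ, x ≤ 1 - lx → Real.exp (-β * (1 - x) / ε) ≤ R := by
    intro x hx
    rw [← hexlx]
    apply Real.exp_le_exp.2
    rw [div_le_div_iff₀ hε hε]
    nlinarith [mul_nonneg (mul_nonneg hβ.le hε.le) (by linarith : (0:ℝ) ≤ 1 - x - lx)]
  have hyfacA : ∀ y : ℝ, ly ≤ y → Real.exp (-y / Real.sqrt ε) ≤ R := by
    intro y hy
    rw [← hexly]
    apply Real.exp_le_exp.2
    rw [div_le_div_iff₀ hsε hsε]
    nlinarith [mul_nonneg hsε.le (sub_nonneg.2 hy)]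
  have hyfacB : ∀ y : ℝ, y ≤ 1 - ly → Real.exp (-(1 - y) / Real.sqrt ε) ≤ R := by
    intro y hy
    rw [← hexly]
    apply Real.exp_le_exp.2
    rw [div_le_div_iff₀ hsε hsε]
    nlinarith [mul_nonneg hsε.le (by linarith : (0:ℝ) ≤ 1 - y - ly)]
  constructor
  · -- the E1 estimate
    have hE1diff : Differentiable ℝ E1 := hE1.1.differentiable (by norm_num)
    have hnode1 : ∀ i j : ℕ, i ≤ 3 * m → 2 * m ≤ j → j ≤ 4 * m →
        |E1 (meshX (6 * m) lx i, meshY (6 * m) ly j)| ≤ C0 * R := by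
      intro i j hi hj1 hj2
      obtain ⟨hmem, hx2, _, _⟩ := hnodeUS i j hi hj1 hj2
      have hb := hE1.2 0 0 (by norm_num) _ hmem
      rw [pd00] at hb
      calc |E1 (meshX (6 * m) lx i, meshY (6 * m) ly j)|
          ≤ C0 * ε ^ (-((0:ℕ):ℝ)) * Real.exp (-β * (1 - meshX (6 * m) lx i) / ε) := hb
        _ = C0 * Real.exp (-β * (1 - meshX (6 * m) lx i) / ε) := by norm_num
        _ ≤ C0 * R := mul_le_mul_of_nonneg_left (hxfac _ hx2) hC0.le
    have hae1 := interp_ae m hm hlxpos.le hlxh hlypos.le hlyh hI1 hnode1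
    set K1 : ℝ := 8 * (C0 * R) * (6 * m) with hK1def
    have hK1nn : 0 ≤ K1 := by
      rw [hK1def]
      positivity
    set u1 : ℝ → ℝ := fun x => C0 * (ε⁻¹ * Real.exp (β * (x - 1) / ε)) with hu1def
    have hu1c : Continuous u1 := by
      rw [hu1def]; fun_prop
    have hu1nn : ∀ x, 0 ≤ u1 x := fun x =>
      mul_nonneg hC0.le (mul_nonneg (inv_nonneg.2 hε.le) (Real.exp_pos _).le)
    have hbd1 : ∀ᵐ p, p ∈ OmegaS lx ly →
        |pdx (fun q => E1 q - EI1 q) p| ≤ u1 p.1 + (fun _ : ℝ => (0:ℝ)) p.2 + K1 := by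
      filter_upwards [hae1] with p hp hpΩ
      obtain ⟨hdiff, hdx, _⟩ := hp hpΩ
      have hsubd : pdx (fun q => E1 q - EI1 q) p = pdx E1 p - pdx EI1 p := by
        show fderiv ℝ _ p (1, 0) = _
        rw [fderiv_fun_sub (hE1diff p) hdiff]
        rfl
      have h1 : |pdx E1 p| ≤ u1 p.1 := by
        have hb := hE1.2 1 0 (by norm_num) p (hsub hpΩ)
        rw [pd10] at hb
        calc |pdx E1 p| ≤ C0 * ε ^ (-((1:ℕ):ℝ)) * Real.exp (-β * (1 - p.1) / ε) := hb
          _ = u1 p.1 := by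
              rw [show -((1:ℕ):ℝ) = (-1:ℝ) by norm_num, Real.rpow_neg_one,
                show -β * (1 - p.1) / ε = β * (p.1 - 1) / ε by ring, hu1def]
              ring
      calc |pdx (fun q => E1 q - EI1 q) p| = |pdx E1 p - pdx EI1 p| := by rw [hsubd]
        _ ≤ |pdx E1 p| + |pdx EI1 p| := abs_sub _ _
        _ ≤ u1 p.1 + K1 := add_le_add h1 (by rw [hK1def]; exact hdx)
        _ = u1 p.1 + (fun _ : ℝ => (0:ℝ)) p.2 + K1 := by simp
    have hstep1 : ∫ p in OmegaS lx ly, |pdx (fun q => E1 q - EI1 q) p|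
        ≤ ∫ p in OmegaS lx ly, (u1 p.1 + (fun _ : ℝ => (0:ℝ)) p.2 + K1) := by
      apply integral_le_of_ae_bound hΩmeas hΩcomp (fun p => abs_nonneg _)
      · rw [hu1def]; fun_prop
      · intro p
        have := hu1nn p.1
        simp only []
        linarith
      · exact hbd1
    have hstep2 : ∫ p in OmegaS lx ly, (u1 p.1 + (fun _ : ℝ => (0:ℝ)) p.2 + K1)
        ≤ (∫ x in Icc (0:ℝ) (1 - lx), u1 x) + (∫ y in Icc ly (1 - ly), (fun _ : ℝ => (0:ℝ)) y)
          + K1 := by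
      apply prod_integral_bound (by linarith) (by linarith) (by linarith) (by linarith) hK1nn
        hu1c continuous_const hu1nn (fun _ => le_refl _)
    have hstep3 : ∫ x in Icc (0:ℝ) (1 - lx), u1 x ≤ C0 * (β⁻¹ * R) := by
      rw [hu1def, MeasureTheory.integral_const_mul]
      apply mul_le_mul_of_nonneg_left _ hC0.le
      have h := exp_int_x hε hβ (by linarith : (0:ℝ) ≤ 1 - lx)
      calc ∫ x in Icc (0:ℝ) (1 - lx), ε⁻¹ * Real.exp (β * (x - 1) / ε)
          ≤ β⁻¹ * Real.exp (β * ((1 - lx) - 1) / ε) := h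
        _ = β⁻¹ * R := by rw [show β * ((1 - lx) - 1) / ε = -(β * lx) / ε by ring, hexlx]
    have hzero : (∫ y in Icc ly (1 - ly), (fun _ : ℝ => (0:ℝ)) y) = 0 := by simp
    have hK1X : K1 = 8 * C0 * (R * NR) := by rw [hK1def, hNR6]; ring
    calc ∫ p in OmegaS lx ly, |pdx (fun q => E1 q - EI1 q) p|
        ≤ (∫ x in Icc (0:ℝ) (1 - lx), u1 x) + (∫ y in Icc ly (1 - ly), (fun _ : ℝ => (0:ℝ)) y)
          + K1 := hstep1.trans hstep2
      _ ≤ C0 * (β⁻¹ * R) + 0 + 8 * C0 * (R * NR) := by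
          rw [hzero, hK1X]
          exact add_le_add_left (add_le_add_left hstep3 0) _
      _ ≤ (C0 * (3 * β⁻¹ + 200) + 1) * X := by
          rw [hRNX]
          have h1 : C0 * (β⁻¹ * R) ≤ C0 * β⁻¹ * X := by
            nlinarith [mul_pos hC0 hbinv]
          nlinarith [mul_pos hC0 hbinv, mul_pos hC0 hXpos]
  · -- the E2 and E12 estimates
    have hE2diff : Differentiable ℝ E2 := hE2.1.differentiable (by norm_num)
    have hE12diff : Differentiable ℝ E12 := hE12.1.differentiable (by norm_num)
    have hrphalf : ε ^ (-((1:ℕ):ℝ)/2) = (Real.sqrt ε)⁻¹ := by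
      rw [show -((1:ℕ):ℝ)/2 = -(1/2 : ℝ) by norm_num, Real.rpow_neg hε.le, Real.sqrt_eq_rpow]
    set w2 : ℝ → ℝ := fun y => C0 * ((Real.sqrt ε)⁻¹ *
        (Real.exp (-y / Real.sqrt ε) + Real.exp (-(1 - y) / Real.sqrt ε))) with hw2def
    have hw2c : Continuous w2 := by rw [hw2def]; fun_prop
    have hw2nn : ∀ y, 0 ≤ w2 y := fun y =>
      mul_nonneg hC0.le (mul_nonneg (inv_nonneg.2 hsε.le) (by positivity))
    have hstepw : ∫ y in Icc ly (1 - ly), w2 y ≤ C0 * (2 * R) := by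
      rw [hw2def, MeasureTheory.integral_const_mul]
      apply mul_le_mul_of_nonneg_left _ hC0.le
      have h := exp_int_y hsε (by linarith : ly ≤ 1 - ly)
      calc ∫ y in Icc ly (1 - ly),
            (Real.sqrt ε)⁻¹ * (Real.exp (-y / Real.sqrt ε) + Real.exp (-(1 - y) / Real.sqrt ε))
          ≤ Real.exp (-ly / Real.sqrt ε) + Real.exp (-(1 - (1 - ly)) / Real.sqrt ε) := h
        _ = 2 * R := by
            rw [show -(1 - (1 - ly)) / Real.sqrt ε = -ly / Real.sqrt ε by ring, hexly]
            ring
    -- S-factor bounds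
    have hSnn : ∀ y : ℝ, 0 ≤ Real.exp (-y / Real.sqrt ε) + Real.exp (-(1 - y) / Real.sqrt ε) :=
      fun y => by positivity
    have hS2 : ∀ y : ℝ, 0 ≤ y → y ≤ 1 →
        Real.exp (-y / Real.sqrt ε) + Real.exp (-(1 - y) / Real.sqrt ε) ≤ 2 := by
      intro y hy0 hy1
      have h1 : Real.exp (-y / Real.sqrt ε) ≤ 1 :=
        Real.exp_le_one_iff.2 (by
          apply div_nonpos_of_nonpos_of_nonneg (by linarith) hsε.le)
      have h2 : Real.exp (-(1 - y) / Real.sqrt ε) ≤ 1 :=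
        Real.exp_le_one_iff.2 (by
          apply div_nonpos_of_nonpos_of_nonneg (by linarith) hsε.le)
      linarith
    have hSR : ∀ y : ℝ, ly ≤ y → y ≤ 1 - ly →
        Real.exp (-y / Real.sqrt ε) + Real.exp (-(1 - y) / Real.sqrt ε) ≤ 2 * R := by
      intro y hy0 hy1
      have := hyfacA y hy0
      have := hyfacB y hy1
      linarith
    -- E2 nodal bound
    have hnode2 : ∀ i j : ℕ, i ≤ 3 * m → 2 * m ≤ j → j ≤ 4 * m →
        |E2 (meshX (6 * m) lx i, meshY (6 * m) ly j)| ≤ 2 * (C0 * R) := by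
      intro i j hi hj1 hj2
      obtain ⟨hmem, _, hy1, hy2⟩ := hnodeUS i j hi hj1 hj2
      have hb := hE2.2 0 0 (by norm_num) _ hmem
      rw [pd00] at hb
      calc |E2 (meshX (6 * m) lx i, meshY (6 * m) ly j)|
          ≤ C0 * ε ^ (-((0:ℕ):ℝ)/2) * (Real.exp (-(meshY (6 * m) ly j) / Real.sqrt ε)
            + Real.exp (-(1 - meshY (6 * m) ly j) / Real.sqrt ε)) := hb
        _ = C0 * (Real.exp (-(meshY (6 * m) ly j) / Real.sqrt ε)
            + Real.exp (-(1 - meshY (6 * m) ly j) / Real.sqrt ε)) := by norm_num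
        _ ≤ C0 * (2 * R) := mul_le_mul_of_nonneg_left (hSR _ hy1 hy2) hC0.le
        _ = 2 * (C0 * R) := by ring
    -- E12 nodal bound
    have hnode12 : ∀ i j : ℕ, i ≤ 3 * m → 2 * m ≤ j → j ≤ 4 * m →
        |E12 (meshX (6 * m) lx i, meshY (6 * m) ly j)| ≤ 2 * (C0 * R) := by
      intro i j hi hj1 hj2
      obtain ⟨hmem, hx2, hy1, hy2⟩ := hnodeUS i j hi hj1 hj2
      have hb := hE12.2 0 0 (by norm_num) _ hmem
      rw [pd00] at hb
      have he : Real.exp (-β * (1 - meshX (6 * m) lx i) / ε) ≤ R := hxfac _ hx2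
      have hS : Real.exp (-(meshY (6 * m) ly j) / Real.sqrt ε)
          + Real.exp (-(1 - meshY (6 * m) ly j) / Real.sqrt ε) ≤ 2 :=
        hS2 _ (by linarith) (by linarith)
      calc |E12 (meshX (6 * m) lx i, meshY (6 * m) ly j)|
          ≤ C0 * ε ^ (-(((0:ℕ):ℝ) + ((0:ℕ):ℝ)/2)) * Real.exp (-β * (1 - meshX (6 * m) lx i) / ε)
            * (Real.exp (-(meshY (6 * m) ly j) / Real.sqrt ε)
              + Real.exp (-(1 - meshY (6 * m) ly j) / Real.sqrt ε)) := hb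
        _ = C0 * Real.exp (-β * (1 - meshX (6 * m) lx i) / ε)
            * (Real.exp (-(meshY (6 * m) ly j) / Real.sqrt ε)
              + Real.exp (-(1 - meshY (6 * m) ly j) / Real.sqrt ε)) := by norm_num
        _ ≤ C0 * R * (Real.exp (-(meshY (6 * m) ly j) / Real.sqrt ε)
              + Real.exp (-(1 - meshY (6 * m) ly j) / Real.sqrt ε)) :=
            mul_le_mul_of_nonneg_right (mul_le_mul_of_nonneg_left he hC0.le) (hSnn _)
        _ ≤ C0 * R * 2 :=
            mul_le_mul_of_nonneg_left hS (mul_nonneg hC0.le hRpos.le)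
        _ = 2 * (C0 * R) := by ring
    have hae2 := interp_ae m hm hlxpos.le hlxh hlypos.le hlyh hI2 hnode2
    have hae12 := interp_ae m hm hlxpos.le hlxh hlypos.le hlyh hI12 hnode12
    set KI : ℝ := 8 * (2 * (C0 * R)) * (6 * m) with hKIdef
    have hKInn : 0 ≤ KI := by rw [hKIdef]; positivity
    set K2 : ℝ := 2 * (C0 * R) + (KI + KI) with hK2def
    have hK2nn : 0 ≤ K2 := by
      rw [hK2def]
      have : (0:ℝ) ≤ 2 * (C0 * R) := by positivity
      linarith
    set u3 : ℝ → ℝ := fun x => (2 * C0) * (ε⁻¹ * Real.exp (β * (x - 1) / ε)) with hu3def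
    have hu3c : Continuous u3 := by rw [hu3def]; fun_prop
    have hu3nn : ∀ x, 0 ≤ u3 x := fun x => by
      have := (Real.exp_pos (β * (x - 1) / ε)).le
      have := inv_nonneg.2 hε.le
      rw [hu3def]
      positivity
    -- a.e. bound for the E2 part
    have hbd2 : ∀ᵐ p, p ∈ OmegaS lx ly →
        |pdx (fun q => E2 q - EI2 q) p| + |pdy (fun q => E2 q - EI2 q) p|
          ≤ (fun _ : ℝ => (0:ℝ)) p.1 + w2 p.2 + K2 := by
      filter_upwards [hae2] with p hp hpΩ
      obtain ⟨hdiff, hdx, hdy⟩ := hp hpΩ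
      obtain ⟨hpx, hpy⟩ := hpΩ
      have hsubdx : pdx (fun q => E2 q - EI2 q) p = pdx E2 p - pdx EI2 p := by
        show fderiv ℝ _ p (1, 0) = _
        rw [fderiv_fun_sub (hE2diff p) hdiff]
        rfl
      have hsubdy : pdy (fun q => E2 q - EI2 q) p = pdy E2 p - pdy EI2 p := by
        show fderiv ℝ _ p (0, 1) = _
        rw [fderiv_fun_sub (hE2diff p) hdiff]
        rfl
      have h1 : |pdx E2 p| ≤ 2 * (C0 * R) := by
        have hb := hE2.2 1 0 (by norm_num) p (hsub ⟨hpx, hpy⟩)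
        rw [pd10] at hb
        calc |pdx E2 p| ≤ C0 * ε ^ (-((0:ℕ):ℝ)/2) * (Real.exp (-p.2 / Real.sqrt ε)
              + Real.exp (-(1 - p.2) / Real.sqrt ε)) := hb
          _ = C0 * (Real.exp (-p.2 / Real.sqrt ε)
              + Real.exp (-(1 - p.2) / Real.sqrt ε)) := by norm_num
          _ ≤ C0 * (2 * R) := mul_le_mul_of_nonneg_left (hSR _ hpy.1 hpy.2) hC0.le
          _ = 2 * (C0 * R) := by ring
      have h2 : |pdy E2 p| ≤ w2 p.2 := by
        have hb := hE2.2 0 1 (by norm_num) p (hsub ⟨hpx, hpy⟩)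
        rw [pd01] at hb
        calc |pdy E2 p| ≤ C0 * ε ^ (-((1:ℕ):ℝ)/2) * (Real.exp (-p.2 / Real.sqrt ε)
              + Real.exp (-(1 - p.2) / Real.sqrt ε)) := hb
          _ = w2 p.2 := by rw [hrphalf, hw2def]; ring
      calc |pdx (fun q => E2 q - EI2 q) p| + |pdy (fun q => E2 q - EI2 q) p|
          = |pdx E2 p - pdx EI2 p| + |pdy E2 p - pdy EI2 p| := by rw [hsubdx, hsubdy]
        _ ≤ (|pdx E2 p| + |pdx EI2 p|) + (|pdy E2 p| + |pdy EI2 p|) :=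
            add_le_add (abs_sub _ _) (abs_sub _ _)
        _ ≤ (2 * (C0 * R) + KI) + (w2 p.2 + KI) := by
            rw [hKIdef]
            exact add_le_add (add_le_add h1 hdx) (add_le_add h2 hdy)
        _ = (fun _ : ℝ => (0:ℝ)) p.1 + w2 p.2 + K2 := by rw [hK2def]; simp; ring
    have hint2 : ∫ p in OmegaS lx ly,
        (|pdx (fun q => E2 q - EI2 q) p| + |pdy (fun q => E2 q - EI2 q) p|)
          ≤ 0 + C0 * (2 * R) + K2 := by
      have hstep1 : ∫ p in OmegaS lx ly,
          (|pdx (fun q => E2 q - EI2 q) p| + |pdy (fun q => E2 q - EI2 q) p|)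
            ≤ ∫ p in OmegaS lx ly, ((fun _ : ℝ => (0:ℝ)) p.1 + w2 p.2 + K2) := by
        apply integral_le_of_ae_bound hΩmeas hΩcomp
          (fun p => add_nonneg (abs_nonneg _) (abs_nonneg _))
        · rw [hw2def]; fun_prop
        · intro p
          have := hw2nn p.2
          simp only []
          linarith
        · exact hbd2
      have hstep2 : ∫ p in OmegaS lx ly, ((fun _ : ℝ => (0:ℝ)) p.1 + w2 p.2 + K2)
          ≤ (∫ x in Icc (0:ℝ) (1 - lx), (fun _ : ℝ => (0:ℝ)) x)
            + (∫ y in Icc ly (1 - ly), w2 y) + K2 :=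
        prod_integral_bound (by linarith) (by linarith) (by linarith) (by linarith) hK2nn
          continuous_const hw2c (fun _ => le_refl _) hw2nn
      have hzero : (∫ x in Icc (0:ℝ) (1 - lx), (fun _ : ℝ => (0:ℝ)) x) = 0 := by simp
      calc ∫ p in OmegaS lx ly,
          (|pdx (fun q => E2 q - EI2 q) p| + |pdy (fun q => E2 q - EI2 q) p|)
          ≤ (∫ x in Icc (0:ℝ) (1 - lx), (fun _ : ℝ => (0:ℝ)) x)
            + (∫ y in Icc ly (1 - ly), w2 y) + K2 := hstep1.trans hstep2
        _ ≤ 0 + C0 * (2 * R) + K2 := by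
            rw [hzero]
            exact add_le_add_left (add_le_add_right hstepw 0) K2
    -- a.e. bound for the E12 part
    have hbd12 : ∀ᵐ p, p ∈ OmegaS lx ly →
        |pdx (fun q => E12 q - EI12 q) p| + |pdy (fun q => E12 q - EI12 q) p|
          ≤ u3 p.1 + w2 p.2 + (KI + KI) := by
      filter_upwards [hae12] with p hp hpΩ
      obtain ⟨hdiff, hdx, hdy⟩ := hp hpΩ
      obtain ⟨hpx, hpy⟩ := hpΩ
      have hsubdx : pdx (fun q => E12 q - EI12 q) p = pdx E12 p - pdx EI12 p := by
        show fderiv ℝ _ p (1, 0) = _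
        rw [fderiv_fun_sub (hE12diff p) hdiff]
        rfl
      have hsubdy : pdy (fun q => E12 q - EI12 q) p = pdy E12 p - pdy EI12 p := by
        show fderiv ℝ _ p (0, 1) = _
        rw [fderiv_fun_sub (hE12diff p) hdiff]
        rfl
      have hSp : Real.exp (-p.2 / Real.sqrt ε) + Real.exp (-(1 - p.2) / Real.sqrt ε) ≤ 2 :=
        hS2 p.2 (by linarith [hpy.1]) (by linarith [hpy.2])
      have h1 : |pdx E12 p| ≤ u3 p.1 := by
        have hb := hE12.2 1 0 (by norm_num) p (hsub ⟨hpx, hpy⟩)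
        rw [pd10] at hb
        have hnn : (0:ℝ) ≤ C0 * ε⁻¹ * Real.exp (-β * (1 - p.1) / ε) :=
          mul_nonneg (mul_nonneg hC0.le (inv_nonneg.2 hε.le)) (Real.exp_pos _).le
        calc |pdx E12 p|
            ≤ C0 * ε ^ (-(((1:ℕ):ℝ) + ((0:ℕ):ℝ)/2)) * Real.exp (-β * (1 - p.1) / ε)
              * (Real.exp (-p.2 / Real.sqrt ε) + Real.exp (-(1 - p.2) / Real.sqrt ε)) := hb
          _ = C0 * ε⁻¹ * Real.exp (-β * (1 - p.1) / ε)
              * (Real.exp (-p.2 / Real.sqrt ε) + Real.exp (-(1 - p.2) / Real.sqrt ε)) := by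
              rw [show -(((1:ℕ):ℝ) + ((0:ℕ):ℝ)/2) = (-1:ℝ) by norm_num, Real.rpow_neg_one]
          _ ≤ C0 * ε⁻¹ * Real.exp (-β * (1 - p.1) / ε) * 2 :=
              mul_le_mul_of_nonneg_left hSp hnn
          _ = u3 p.1 := by
              rw [hu3def, show -β * (1 - p.1) / ε = β * (p.1 - 1) / ε by ring]
              ring
      have h2 : |pdy E12 p| ≤ w2 p.2 := by
        have hb := hE12.2 0 1 (by norm_num) p (hsub ⟨hpx, hpy⟩)
        rw [pd01] at hb
        have hexp1 : Real.exp (-β * (1 - p.1) / ε) ≤ 1 :=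
          Real.exp_le_one_iff.2 (by
            apply div_nonpos_of_nonpos_of_nonneg _ hε.le
            nlinarith [hpx.2, hlxpos])
        have hnn : (0:ℝ) ≤ C0 * (Real.sqrt ε)⁻¹ :=
          mul_nonneg hC0.le (inv_nonneg.2 hsε.le)
        calc |pdy E12 p|
            ≤ C0 * ε ^ (-(((0:ℕ):ℝ) + ((1:ℕ):ℝ)/2)) * Real.exp (-β * (1 - p.1) / ε)
              * (Real.exp (-p.2 / Real.sqrt ε) + Real.exp (-(1 - p.2) / Real.sqrt ε)) := hb
          _ = C0 * (Real.sqrt ε)⁻¹ * Real.exp (-β * (1 - p.1) / ε)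
              * (Real.exp (-p.2 / Real.sqrt ε) + Real.exp (-(1 - p.2) / Real.sqrt ε)) := by
              rw [show -(((0:ℕ):ℝ) + ((1:ℕ):ℝ)/2) = -((1:ℕ):ℝ)/2 by norm_num, hrphalf]
          _ ≤ C0 * (Real.sqrt ε)⁻¹ * 1
              * (Real.exp (-p.2 / Real.sqrt ε) + Real.exp (-(1 - p.2) / Real.sqrt ε)) :=
              mul_le_mul_of_nonneg_right (mul_le_mul_of_nonneg_left hexp1 hnn) (hSnn _)
          _ = w2 p.2 := by rw [hw2def]; ring
      calc |pdx (fun q => E12 q - EI12 q) p| + |pdy (fun q => E12 q - EI12 q) p|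
          = |pdx E12 p - pdx EI12 p| + |pdy E12 p - pdy EI12 p| := by rw [hsubdx, hsubdy]
        _ ≤ (|pdx E12 p| + |pdx EI12 p|) + (|pdy E12 p| + |pdy EI12 p|) :=
            add_le_add (abs_sub _ _) (abs_sub _ _)
        _ ≤ (u3 p.1 + KI) + (w2 p.2 + KI) := by
            rw [hKIdef]
            exact add_le_add (add_le_add h1 hdx) (add_le_add h2 hdy)
        _ = u3 p.1 + w2 p.2 + (KI + KI) := by ring
    have hint12 : ∫ p in OmegaS lx ly,
        (|pdx (fun q => E12 q - EI12 q) p| + |pdy (fun q => E12 q - EI12 q) p|)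
          ≤ (2 * C0) * (β⁻¹ * R) + C0 * (2 * R) + (KI + KI) := by
      have hstep1 : ∫ p in OmegaS lx ly,
          (|pdx (fun q => E12 q - EI12 q) p| + |pdy (fun q => E12 q - EI12 q) p|)
            ≤ ∫ p in OmegaS lx ly, (u3 p.1 + w2 p.2 + (KI + KI)) := by
        apply integral_le_of_ae_bound hΩmeas hΩcomp
          (fun p => add_nonneg (abs_nonneg _) (abs_nonneg _))
        · rw [hu3def, hw2def]; fun_prop
        · intro p
          have := hw2nn p.2
          have := hu3nn p.1
          linarith
        · exact hbd12
      have hstep2 : ∫ p in OmegaS lx ly, (u3 p.1 + w2 p.2 + (KI + KI))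
          ≤ (∫ x in Icc (0:ℝ) (1 - lx), u3 x) + (∫ y in Icc ly (1 - ly), w2 y) + (KI + KI) :=
        prod_integral_bound (by linarith) (by linarith) (by linarith) (by linarith)
          (by linarith) hu3c hw2c hu3nn hw2nn
      have hstep3 : ∫ x in Icc (0:ℝ) (1 - lx), u3 x ≤ (2 * C0) * (β⁻¹ * R) := by
        rw [hu3def, MeasureTheory.integral_const_mul]
        apply mul_le_mul_of_nonneg_left _ (by linarith : (0:ℝ) ≤ 2 * C0)
        have h := exp_int_x hε hβ (by linarith : (0:ℝ) ≤ 1 - lx)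
        calc ∫ x in Icc (0:ℝ) (1 - lx), ε⁻¹ * Real.exp (β * (x - 1) / ε)
            ≤ β⁻¹ * Real.exp (β * ((1 - lx) - 1) / ε) := h
          _ = β⁻¹ * R := by rw [show β * ((1 - lx) - 1) / ε = -(β * lx) / ε by ring, hexlx]
      calc ∫ p in OmegaS lx ly,
          (|pdx (fun q => E12 q - EI12 q) p| + |pdy (fun q => E12 q - EI12 q) p|)
          ≤ (∫ x in Icc (0:ℝ) (1 - lx), u3 x) + (∫ y in Icc ly (1 - ly), w2 y) + (KI + KI) :=
            hstep1.trans hstep2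
        _ ≤ (2 * C0) * (β⁻¹ * R) + C0 * (2 * R) + (KI + KI) :=
            add_le_add_left (add_le_add hstep3 hstepw) _
    -- combine
    have hKIX : KI = 16 * C0 * X := by rw [hKIdef, ← hRNX, hNR6]; ring
    calc (∫ p in OmegaS lx ly,
          (|pdx (fun q => E2 q - EI2 q) p| + |pdy (fun q => E2 q - EI2 q) p|))
        + (∫ p in OmegaS lx ly,
          (|pdx (fun q => E12 q - EI12 q) p| + |pdy (fun q => E12 q - EI12 q) p|))
        ≤ (0 + C0 * (2 * R) + K2) + ((2 * C0) * (β⁻¹ * R) + C0 * (2 * R) + (KI + KI)) :=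
          add_le_add hint2 hint12
      _ ≤ (C0 * (3 * β⁻¹ + 200) + 1) * X := by
          rw [hK2def, hKIX]
          have h1 : C0 * R ≤ C0 * X := by nlinarith
          have h2 : C0 * (β⁻¹ * R) ≤ C0 * β⁻¹ * X := by
            nlinarith [mul_pos hC0 hbinv]
          nlinarith [mul_pos hC0 hbinv, mul_pos hC0 hXpos]
end
end

section
/- Fix k > 0 and K > 0, let x* = (x*, y*) be a mesh node of the Shishkin mesh, set σ_x = kN^{-1}ln N, σ_y = kN^{-1/2}, Ω_0 = {(x,y) ∈ Ω : x − x* ≤ Kσ_x ln N and |y − y*| ≤ Kσ_y ln N}, and let Ω'_0 be the smallest union of mesh rectangles containing Ω_0. Then there exists a constant C, independent of ε, N and x*, such that ‖Δ(E_1 + E_12)‖_{L^1(Ω_s ∩ Ω'_0)} ≤ C ε^{-1} N^{-5/2} σ_y ln N. -/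
open MeasureTheory Real Set

noncomputable section

section AuxLemmas

lemma pdx_cd2 {f : ℝ × ℝ → ℝ} (hf : ContDiff ℝ 3 f) : ContDiff ℝ 2 (pdx f) :=
  (hf.fderiv_right (by norm_num)).clm_apply contDiff_const

lemma pdy_cd2 {f : ℝ × ℝ → ℝ} (hf : ContDiff ℝ 3 f) : ContDiff ℝ 2 (pdy f) :=
  (hf.fderiv_right (by norm_num)).clm_apply contDiff_const

lemma pdx_cd1 {f : ℝ × ℝ → ℝ} (hf : ContDiff ℝ 2 f) : ContDiff ℝ 1 (pdx f) :=
  (hf.fderiv_right (by norm_num)).clm_apply contDiff_const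

lemma pdy_cd1 {f : ℝ × ℝ → ℝ} (hf : ContDiff ℝ 2 f) : ContDiff ℝ 1 (pdy f) :=
  (hf.fderiv_right (by norm_num)).clm_apply contDiff_const

lemma pdx_add' {f g : ℝ × ℝ → ℝ} (hf : Differentiable ℝ f) (hg : Differentiable ℝ g) :
    pdx (fun q => f q + g q) = fun q => pdx f q + pdx g q := by
  funext p; simp only [pdx]; rw [fderiv_fun_add (hf p) (hg p)]; simp

lemma pdy_add' {f g : ℝ × ℝ → ℝ} (hf : Differentiable ℝ f) (hg : Differentiable ℝ g) :
    pdy (fun q => f q + g q) = fun q => pdy f q + pdy g q := by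
  funext p; simp only [pdy]; rw [fderiv_fun_add (hf p) (hg p)]; simp

lemma pd20_add {f g : ℝ × ℝ → ℝ} (hf : ContDiff ℝ 3 f) (hg : ContDiff ℝ 3 g) (p : ℝ × ℝ) :
    pd 2 0 (fun q => f q + g q) p = pd 2 0 f p + pd 2 0 g p := by
  have h : ∀ h : ℝ × ℝ → ℝ, pd 2 0 h = pdx (pdx h) := fun _ => rfl
  rw [h, h, h, pdx_add' (hf.differentiable (by norm_num)) (hg.differentiable (by norm_num)),
    pdx_add' ((pdx_cd2 hf).differentiable (by norm_num)) ((pdx_cd2 hg).differentiable (by norm_num))]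

lemma pd02_add {f g : ℝ × ℝ → ℝ} (hf : ContDiff ℝ 3 f) (hg : ContDiff ℝ 3 g) (p : ℝ × ℝ) :
    pd 0 2 (fun q => f q + g q) p = pd 0 2 f p + pd 0 2 g p := by
  have h : ∀ h : ℝ × ℝ → ℝ, pd 0 2 h = pdy (pdy h) := fun _ => rfl
  rw [h, h, h, pdy_add' (hf.differentiable (by norm_num)) (hg.differentiable (by norm_num)),
    pdy_add' ((pdy_cd2 hf).differentiable (by norm_num)) ((pdy_cd2 hg).differentiable (by norm_num))]

lemma pd20_cont {f : ℝ × ℝ → ℝ} (hf : ContDiff ℝ 3 f) : Continuous (pd 2 0 f) :=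
  (pdx_cd1 (pdx_cd2 hf)).continuous

lemma pd02_cont {f : ℝ × ℝ → ℝ} (hf : ContDiff ℝ 3 f) : Continuous (pd 0 2 f) :=
  (pdy_cd1 (pdy_cd2 hf)).continuous

lemma integral_exp_affine (c d a b : ℝ) (hc : c ≠ 0) :
    ∫ x in a..b, Real.exp (c * x + d) = (Real.exp (c * b + d) - Real.exp (c * a + d)) / c := by
  have hder : ∀ x ∈ uIcc a b, HasDerivAt (fun x => Real.exp (c * x + d) / c)
      (Real.exp (c * x + d)) x := by
    intro x _
    have h1 : HasDerivAt (fun x : ℝ => c * x + d) c x := by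
      simpa using ((hasDerivAt_id x).const_mul c).add_const d
    have h3 := ((Real.hasDerivAt_exp (c * x + d)).comp x h1).div_const c
    simpa [mul_div_assoc, mul_div_cancel_right₀ _ hc] using h3
  have hint : IntervalIntegrable (fun x => Real.exp (c * x + d)) volume a b :=
    (Real.continuous_exp.comp (by continuity)).intervalIntegrable a b
  rw [intervalIntegral.integral_eq_sub_of_hasDerivAt hder hint]
  ring

lemma meshY_spacing {N : ℕ} {ly : ℝ} (hdvd : 6 ∣ N) (hN0 : 0 < N)
    (hly0 : 0 ≤ ly) (hly : ly ≤ 1 / 4) {j : ℕ} (hj1 : 1 ≤ j) (hjN : j ≤ N) :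
    meshY N ly j - meshY N ly (j - 1) ≤ 3 / (N : ℝ) := by
  obtain ⟨m, rfl⟩ := hdvd
  have hm : 1 ≤ m := by omega
  have hmR : (1 : ℝ) ≤ (m : ℝ) := by exact_mod_cast hm
  have hNR : ((6 * m : ℕ) : ℝ) = 6 * (m : ℝ) := by push_cast; ring
  have hNpos : (0 : ℝ) < 6 * (m : ℝ) := by linarith
  have hj1R : ((j - 1 : ℕ) : ℝ) = (j : ℝ) - 1 := by
    have := Nat.cast_sub (R := ℝ) hj1; simpa using this
  have hjR : (1 : ℝ) ≤ (j : ℝ) := by exact_mod_cast hj1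
  rcases (by omega : j ≤ 2 * m ∨ j = 2 * m + 1 ∨ (2 * m + 2 ≤ j ∧ j ≤ 4 * m) ∨
      j = 4 * m + 1 ∨ 4 * m + 2 ≤ j) with h | h | h | h | h
  · have e1 : meshY (6 * m) ly j = 3 * (j : ℝ) * ly / ((6 * m : ℕ) : ℝ) := by
      rw [meshY, if_pos (by omega)]
    have e2 : meshY (6 * m) ly (j - 1) = 3 * ((j - 1 : ℕ) : ℝ) * ly / ((6 * m : ℕ) : ℝ) := by
      rw [meshY, if_pos (by omega)]
    rw [e1, e2, hj1R, hNR, sub_le_iff_le_add, ← add_div, div_le_div_iff₀ hNpos hNpos]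
    nlinarith
  · have e1 : meshY (6 * m) ly j = (3 * (j : ℝ) / ((6 * m : ℕ) : ℝ) - 1)
        - 3 * (2 * (j : ℝ) - ((6 * m : ℕ) : ℝ)) * ly / ((6 * m : ℕ) : ℝ) := by
      rw [meshY, if_neg (by omega), if_pos (by omega)]
    have e2 : meshY (6 * m) ly (j - 1) = 3 * ((j - 1 : ℕ) : ℝ) * ly / ((6 * m : ℕ) : ℝ) := by
      rw [meshY, if_pos (by omega)]
    have hjm : (j : ℝ) = 2 * (m : ℝ) + 1 := by exact_mod_cast congrArg (Nat.cast (R := ℝ)) h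
    rw [e1, e2, hj1R, hNR, hjm, le_div_iff₀ hNpos]
    field_simp
    nlinarith
  · have e1 : meshY (6 * m) ly j = (3 * (j : ℝ) / ((6 * m : ℕ) : ℝ) - 1)
        - 3 * (2 * (j : ℝ) - ((6 * m : ℕ) : ℝ)) * ly / ((6 * m : ℕ) : ℝ) := by
      rw [meshY, if_neg (by omega), if_pos (by omega)]
    have e2 : meshY (6 * m) ly (j - 1) = (3 * ((j - 1 : ℕ) : ℝ) / ((6 * m : ℕ) : ℝ) - 1)
        - 3 * (2 * ((j - 1 : ℕ) : ℝ) - ((6 * m : ℕ) : ℝ)) * ly / ((6 * m : ℕ) : ℝ) := by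
      rw [meshY, if_neg (by omega), if_pos (by omega)]
    rw [e1, e2, hj1R, hNR, le_div_iff₀ hNpos]
    field_simp
    nlinarith
  · have e1 : meshY (6 * m) ly j = 1 - 3 * (((6 * m : ℕ) : ℝ) - (j : ℝ)) * ly / ((6 * m : ℕ) : ℝ) := by
      rw [meshY, if_neg (by omega), if_neg (by omega)]
    have e2 : meshY (6 * m) ly (j - 1) = (3 * ((j - 1 : ℕ) : ℝ) / ((6 * m : ℕ) : ℝ) - 1)
        - 3 * (2 * ((j - 1 : ℕ) : ℝ) - ((6 * m : ℕ) : ℝ)) * ly / ((6 * m : ℕ) : ℝ) := by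
      rw [meshY, if_neg (by omega), if_pos (by omega)]
    have hjm : (j : ℝ) = 4 * (m : ℝ) + 1 := by exact_mod_cast congrArg (Nat.cast (R := ℝ)) h
    rw [e1, e2, hj1R, hNR, hjm, le_div_iff₀ hNpos]
    field_simp
    nlinarith
  · have e1 : meshY (6 * m) ly j = 1 - 3 * (((6 * m : ℕ) : ℝ) - (j : ℝ)) * ly / ((6 * m : ℕ) : ℝ) := by
      rw [meshY, if_neg (by omega), if_neg (by omega)]
    have e2 : meshY (6 * m) ly (j - 1) = 1 - 3 * (((6 * m : ℕ) : ℝ) - ((j - 1 : ℕ) : ℝ)) * ly / ((6 * m : ℕ) : ℝ) := by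
      rw [meshY, if_neg (by omega), if_neg (by omega)]
    rw [e1, e2, hj1R, hNR, le_div_iff₀ hNpos]
    field_simp
    nlinarith

end AuxLemmas


lemma sum_bound_aux {C0 u e e1 e2 a1 a2 a3 a4 : ℝ} (hC0 : 0 < C0) (hu : 1 ≤ u) (he : 0 < e)
    (h1 : 0 < e1) (h2 : 0 < e2) (he1 : e1 ≤ 1) (he2 : e2 ≤ 1)
    (b1 : a1 ≤ C0 * (u * u) * e) (b2 : a2 ≤ C0 * e)
    (b3 : a3 ≤ C0 * (u * u) * e * (e1 + e2)) (b4 : a4 ≤ C0 * u * e * (e1 + e2)) :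
    a1 + a3 + (a2 + a4) ≤ 6 * C0 * (u * u) * e := by
  have hA : 0 ≤ C0 * e * ((u * u + u) * (2 - e1 - e2)) :=
    mul_nonneg (mul_nonneg hC0.le he.le)
      (mul_nonneg (by nlinarith) (by linarith))
  have hB : 0 ≤ C0 * e * (3 * (u * u) - 2 * u - 1) :=
    mul_nonneg (mul_nonneg hC0.le he.le) (by nlinarith [sq_nonneg (u - 1)])
  nlinarith [b1, b2, b3, b4, hA, hB]

set_option maxHeartbeats 2000000 in
/-- Local `L¹` bound for the Laplacian of the exponential-layer parts:
`‖Δ(E₁ + E₁₂)‖_{L¹(Ω_s ∩ Ω₀')} ≤ C ε⁻¹ N^{-5/2} σ_y ln N`. -/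
theorem local_L1_laplacian_estimate (β C0 k K : ℝ)
    (hβ : 0 < β) (hC0 : 0 < C0) (hk : 0 < k) (hK : 0 < K) :
    ∃ C : ℝ, 0 < C ∧
      ∀ (N : ℕ) (ε lx ly : ℝ) (i0 j0 : ℕ) (E1 E12 : ℝ × ℝ → ℝ) (xs ys sx sy : ℝ),
        ShishkinHyp N ε β lx ly →
        i0 ≤ N → j0 ≤ N →
        xs = meshX N lx i0 → ys = meshY N ly j0 →
        sx = k * (N : ℝ)⁻¹ * Real.log (N : ℝ) → sy = k * (N : ℝ) ^ (-(1 / 2 : ℝ)) →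
        BoundE1 ε β C0 E1 → BoundE12 ε β C0 E12 →
        ∫ p in OmegaS lx ly ∩ OmegaZero' N lx ly xs ys K sx sy,
            |pd 2 0 (fun q => E1 q + E12 q) p + pd 0 2 (fun q => E1 q + E12 q) p|
          ≤ C * ε⁻¹ * (N : ℝ) ^ (-(5 / 2 : ℝ)) * sy * Real.log (N : ℝ) := by
  have hlog6 : 0 < Real.log 6 := Real.log_pos (by norm_num)
  refine ⟨6 * C0 / β * (2 * K + 6 / (k * Real.log 6)), by positivity, ?_⟩
  intro N ε lx ly i0 j0 E1 E12 xs ys sx sy hSh hi0 hj0 hxs hys hsx hsy hE1 hE12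
  obtain ⟨hN0, hdvd, hε, hεN, hβ0, hlxe, hlye, hlx2, hly4⟩ := hSh
  have hN6 : 6 ≤ N := Nat.le_of_dvd hN0 hdvd
  have hNR : (6 : ℝ) ≤ (N : ℝ) := by exact_mod_cast hN6
  have hNpos : (0 : ℝ) < (N : ℝ) := by linarith
  have hN1 : (1 : ℝ) ≤ (N : ℝ) := by linarith
  have hlogN : Real.log 6 ≤ Real.log (N : ℝ) := Real.log_le_log (by norm_num) hNR
  have hlogN0 : 0 < Real.log (N : ℝ) := lt_of_lt_of_le hlog6 hlogN
  have hε1 : ε ≤ 1 := hεN.trans (inv_le_one_of_one_le₀ hN1)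
  have hu1 : 1 ≤ ε⁻¹ := (one_le_inv₀ hε).mpr hε1
  have hlx0 : 0 ≤ lx := by
    rw [hlxe]; exact mul_nonneg (by positivity) hlogN0.le
  have hly0 : 0 ≤ ly := by
    rw [hlye]; exact mul_nonneg (by positivity) hlogN0.le
  have hsy0 : 0 < sy := by
    rw [hsy]; exact mul_pos hk (Real.rpow_pos_of_pos hNpos _)
  set M := K * sy * Real.log (N : ℝ) with hMdef
  have hM0 : 0 ≤ M := by
    rw [hMdef]; exact mul_nonneg (mul_nonneg hK.le hsy0.le) hlogN0.le
  set A : ℝ := max (ys - M - 3 / (N : ℝ)) 0 with hA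
  set B : ℝ := min (ys + M + 3 / (N : ℝ)) 1 with hB
  set R2 : Set (ℝ × ℝ) := Icc (0 : ℝ) (1 - lx) ×ˢ Icc A B with hR2
  -- the subset property
  have hsub : OmegaS lx ly ∩ OmegaZero' N lx ly xs ys K sx sy ⊆ R2 := by
    rintro p ⟨hpS, hpO⟩
    have hx : p.1 ∈ Icc (0 : ℝ) (1 - lx) := hpS.1
    have hy : p.2 ∈ Icc ly (1 - ly) := hpS.2
    simp only [OmegaZero', mem_iUnion] at hpO
    obtain ⟨i, hi, j, hj, hvol, hpτ⟩ := hpO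
    simp only [Finset.mem_Icc] at hj
    have hne : (OmegaZero N xs ys K sx sy ∩ meshRect N lx ly i j).Nonempty := by
      rw [Set.nonempty_iff_ne_empty]
      intro hcon
      rw [hcon] at hvol
      exact hvol measure_empty
    obtain ⟨q, hq0, hqτ⟩ := hne
    have hq2 : |q.2 - ys| ≤ M := by
      have := hq0.2.2
      rw [hMdef]
      exact this
    have hpy := hpτ.2
    have hqy := hqτ.2
    have hspace : meshY N ly j - meshY N ly (j - 1) ≤ 3 / (N : ℝ) :=
      meshY_spacing hdvd hN0 hly0 hly4 hj.1 hj.2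
    rw [Set.mem_Icc] at hpy hqy
    have habs := abs_le.mp hq2
    have hyI := Set.mem_Icc.mp hy
    refine ⟨hx, Set.mem_Icc.mpr ⟨?_, ?_⟩⟩
    · apply max_le
      · linarith [hpy.1, hqy.2, habs.1, hspace]
      · linarith [hyI.1]
    · apply le_min
      · linarith [hpy.2, hqy.1, habs.2, hspace]
      · linarith [hyI.2]
  have hR2U : R2 ⊆ UnitSq := by
    rintro p ⟨hx, hy⟩
    rw [Set.mem_Icc] at hx hy
    exact ⟨Set.mem_Icc.mpr ⟨hx.1, by linarith [hx.2]⟩,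
      Set.mem_Icc.mpr ⟨le_trans (le_max_right _ _) hy.1, le_trans hy.2 (min_le_right _ _)⟩⟩
  -- analytic setup
  have hsum : ContDiff ℝ 3 (fun q => E1 q + E12 q) := hE1.1.add hE12.1
  have hGcont : Continuous (fun p =>
      |pd 2 0 (fun q => E1 q + E12 q) p + pd 0 2 (fun q => E1 q + E12 q) p|) :=
    ((pd20_cont hsum).add (pd02_cont hsum)).abs
  have hR2m : MeasurableSet R2 := measurableSet_Icc.prod measurableSet_Icc
  have hR2c : IsCompact R2 := isCompact_Icc.prod isCompact_Icc
  have hIntG : IntegrableOn (fun p =>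
      |pd 2 0 (fun q => E1 q + E12 q) p + pd 0 2 (fun q => E1 q + E12 q) p|) R2 :=
    hGcont.continuousOn.integrableOn_compact hR2c
  have hTcont : Continuous (fun p : ℝ × ℝ =>
      6 * C0 * (ε⁻¹ * ε⁻¹) * Real.exp (-β * (1 - p.1) / ε)) := by
    apply continuous_const.mul
    exact Real.continuous_exp.comp (by fun_prop)
  have hIntT : IntegrableOn (fun p : ℝ × ℝ =>
      6 * C0 * (ε⁻¹ * ε⁻¹) * Real.exp (-β * (1 - p.1) / ε)) R2 :=
    hTcont.continuousOn.integrableOn_compact hR2c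
  -- pointwise bound
  have hr2 : ε ^ (-2 : ℝ) = ε⁻¹ * ε⁻¹ := by
    rw [show (-2 : ℝ) = (-1) + (-1) by norm_num, Real.rpow_add hε, Real.rpow_neg_one]
  have hr1 : ε ^ (-1 : ℝ) = ε⁻¹ := Real.rpow_neg_one ε
  have hpt : ∀ p ∈ R2,
      |pd 2 0 (fun q => E1 q + E12 q) p + pd 0 2 (fun q => E1 q + E12 q) p|
        ≤ 6 * C0 * (ε⁻¹ * ε⁻¹) * Real.exp (-β * (1 - p.1) / ε) := by
    intro p hp
    have hpU : p ∈ UnitSq := hR2U hp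
    have hy0 : 0 ≤ p.2 := (Set.mem_Icc.mp hpU.2).1
    have hy1 : p.2 ≤ 1 := (Set.mem_Icc.mp hpU.2).2
    have hsε : 0 < Real.sqrt ε := Real.sqrt_pos.mpr hε
    have b1 := hE1.2 2 0 (by norm_num) p hpU
    have b2 := hE1.2 0 2 (by norm_num) p hpU
    have b3 := hE12.2 2 0 (by norm_num) p hpU
    have b4 := hE12.2 0 2 (by norm_num) p hpU
    norm_num at b1 b2 b3 b4
    have harg : -(β * (1 - p.1)) / ε = -β * (1 - p.1) / ε := by ring
    rw [harg] at b1 b2 b3 b4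
    have harg2 : (p.2 - 1) / Real.sqrt ε = -(1 - p.2) / Real.sqrt ε := by ring
    rw [harg2] at b3 b4
    have hr2' : (ε ^ 2)⁻¹ = ε⁻¹ * ε⁻¹ := by rw [sq, mul_inv]
    rw [hr2'] at b1 b3
    rw [hr1] at b4
    have hey1 : Real.exp (-p.2 / Real.sqrt ε) ≤ 1 := by
      rw [Real.exp_le_one_iff]
      exact div_nonpos_of_nonpos_of_nonneg (neg_nonpos.mpr hy0) hsε.le
    have hey2 : Real.exp (-(1 - p.2) / Real.sqrt ε) ≤ 1 := by
      rw [Real.exp_le_one_iff]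
      exact div_nonpos_of_nonpos_of_nonneg (by linarith) hsε.le
    have hey0 : 0 < Real.exp (-p.2 / Real.sqrt ε) := Real.exp_pos _
    have hey0' : 0 < Real.exp (-(1 - p.2) / Real.sqrt ε) := Real.exp_pos _
    have heE : 0 < Real.exp (-β * (1 - p.1) / ε) := Real.exp_pos _
    rw [pd20_add hE1.1 hE12.1, pd02_add hE1.1 hE12.1]
    have habs : |pd 2 0 E1 p + pd 2 0 E12 p + (pd 0 2 E1 p + pd 0 2 E12 p)|
        ≤ |pd 2 0 E1 p| + |pd 2 0 E12 p| + (|pd 0 2 E1 p| + |pd 0 2 E12 p|) :=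
      (abs_add_le _ _).trans (add_le_add (abs_add_le _ _) (abs_add_le _ _))
    refine habs.trans ?_
    exact sum_bound_aux hC0 hu1 heE hey0 hey0' hey1 hey2 b1 b2 b3 b4
  -- step 1 and 2
  have step1 : ∫ p in OmegaS lx ly ∩ OmegaZero' N lx ly xs ys K sx sy,
      |pd 2 0 (fun q => E1 q + E12 q) p + pd 0 2 (fun q => E1 q + E12 q) p|
      ≤ ∫ p in R2, |pd 2 0 (fun q => E1 q + E12 q) p + pd 0 2 (fun q => E1 q + E12 q) p| :=
    setIntegral_mono_set hIntG (Filter.Eventually.of_forall fun p => abs_nonneg _)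
      (HasSubset.Subset.eventuallyLE hsub)
  have step2 : ∫ p in R2, |pd 2 0 (fun q => E1 q + E12 q) p + pd 0 2 (fun q => E1 q + E12 q) p|
      ≤ ∫ p in R2, 6 * C0 * (ε⁻¹ * ε⁻¹) * Real.exp (-β * (1 - p.1) / ε) :=
    setIntegral_mono_on hIntG hIntT hR2m hpt
  -- step 3 : evaluate the majorant integral
  have hprod : ∫ p in R2, 6 * C0 * (ε⁻¹ * ε⁻¹) * Real.exp (-β * (1 - p.1) / ε)
      = (∫ x in Icc (0 : ℝ) (1 - lx), 6 * C0 * (ε⁻¹ * ε⁻¹) * Real.exp (-β * (1 - x) / ε))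
        * ∫ y in Icc A B, (1 : ℝ) := by
    have := MeasureTheory.setIntegral_prod_mul (μ := (volume : Measure ℝ))
      (ν := (volume : Measure ℝ))
      (fun x : ℝ => 6 * C0 * (ε⁻¹ * ε⁻¹) * Real.exp (-β * (1 - x) / ε))
      (fun _ : ℝ => (1 : ℝ)) (Icc (0 : ℝ) (1 - lx)) (Icc A B)
    simp only [mul_one] at this
    rw [← Measure.volume_eq_prod] at this
    rw [hR2]
    exact this
  have hlxu : (0 : ℝ) ≤ 1 - lx := by linarith
  have hcpos : 0 < β / ε := div_pos hβ0 hε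
  have hIx : ∫ x in Icc (0 : ℝ) (1 - lx), Real.exp (-β * (1 - x) / ε)
      = (Real.exp (β / ε * (1 - lx) + -(β / ε)) - Real.exp (β / ε * 0 + -(β / ε))) / (β / ε) := by
    rw [MeasureTheory.integral_Icc_eq_integral_Ioc,
      ← intervalIntegral.integral_of_le hlxu]
    have hfx : ∀ x : ℝ, -β * (1 - x) / ε = β / ε * x + -(β / ε) := by
      intro x; field_simp; ring
    simp_rw [hfx]
    exact integral_exp_affine _ _ _ _ hcpos.ne'
  have hexpval : β / ε * (1 - lx) + -(β / ε) = -(5 / 2) * Real.log (N : ℝ) := by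
    rw [hlxe]
    field_simp
    ring
  have hexpN : Real.exp (-(5 / 2) * Real.log (N : ℝ)) = (N : ℝ) ^ (-(5 / 2 : ℝ)) := by
    rw [Real.rpow_def_of_pos hNpos, mul_comm]
  have hIxle : ∫ x in Icc (0 : ℝ) (1 - lx), Real.exp (-β * (1 - x) / ε)
      ≤ ε / β * (N : ℝ) ^ (-(5 / 2 : ℝ)) := by
    rw [hIx, hexpval, hexpN]
    have h2 : 0 < Real.exp (β / ε * 0 + -(β / ε)) := Real.exp_pos _
    have hrpos : 0 < (N : ℝ) ^ (-(5 / 2 : ℝ)) := Real.rpow_pos_of_pos hNpos _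
    rw [div_le_iff₀ hcpos]
    have : ε / β * (N : ℝ) ^ (-(5 / 2 : ℝ)) * (β / ε) = (N : ℝ) ^ (-(5 / 2 : ℝ)) := by
      field_simp
    rw [this]
    linarith
  have hIx0 : 0 ≤ ∫ x in Icc (0 : ℝ) (1 - lx), Real.exp (-β * (1 - x) / ε) :=
    setIntegral_nonneg measurableSet_Icc fun x _ => (Real.exp_pos _).le
  have hIyle : ∫ y in Icc A B, (1 : ℝ) ≤ 2 * M + 6 / (N : ℝ) := by
    have h0 : (0 : ℝ) ≤ 2 * M + 6 / (N : ℝ) := by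
      have h6 : (0 : ℝ) < 6 / (N : ℝ) := by positivity
      linarith
    rw [setIntegral_const, smul_eq_mul, mul_one, measureReal_def, Real.volume_Icc]
    calc (ENNReal.ofReal (B - A)).toReal
        ≤ (ENNReal.ofReal (2 * M + 6 / (N : ℝ))).toReal := by
          apply ENNReal.toReal_mono ENNReal.ofReal_ne_top
          apply ENNReal.ofReal_le_ofReal
          have h1 : B ≤ ys + M + 3 / (N : ℝ) := min_le_left _ _
          have h2 : ys - M - 3 / (N : ℝ) ≤ A := le_max_left _ _
          have h3 : (6 : ℝ) / (N : ℝ) = 3 / (N : ℝ) + 3 / (N : ℝ) := by ring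
          linarith
      _ = _ := ENNReal.toReal_ofReal h0
  have hIy0 : 0 ≤ ∫ y in Icc A B, (1 : ℝ) :=
    setIntegral_nonneg measurableSet_Icc fun _ _ => zero_le_one
  have hsyL : 2 * M + 6 / (N : ℝ)
      ≤ (2 * K + 6 / (k * Real.log 6)) * (sy * Real.log (N : ℝ)) := by
    have hrp : (N : ℝ)⁻¹ ≤ (N : ℝ) ^ (-(1 / 2 : ℝ)) := by
      rw [show ((N : ℝ)⁻¹) = (N : ℝ) ^ (-1 : ℝ) from (Real.rpow_neg_one _).symm]
      exact Real.rpow_le_rpow_of_exponent_le hN1 (by norm_num)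
    have hx0 : (0 : ℝ) < (N : ℝ) ^ (-(1 / 2 : ℝ)) := Real.rpow_pos_of_pos hNpos _
    have h6 : 6 / (N : ℝ) ≤ 6 / (k * Real.log 6) * (sy * Real.log (N : ℝ)) := by
      rw [hsy]
      have heq : 6 / (k * Real.log 6) * (k * (N : ℝ) ^ (-(1 / 2 : ℝ)) * Real.log (N : ℝ))
          = 6 * ((N : ℝ) ^ (-(1 / 2 : ℝ)) * (Real.log (N : ℝ) / Real.log 6)) := by
        field_simp
      rw [heq]
      have hone : 1 ≤ Real.log (N : ℝ) / Real.log 6 := (one_le_div hlog6).mpr hlogN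
      have h6N : 6 / (N : ℝ) = 6 * (N : ℝ)⁻¹ := by ring
      rw [h6N]
      have hXQ : (N : ℝ)⁻¹ ≤ (N : ℝ) ^ (-(1 / 2 : ℝ)) * (Real.log (N : ℝ) / Real.log 6) :=
        hrp.trans (le_mul_of_one_le_right hx0.le hone)
      linarith [hXQ]
    calc 2 * M + 6 / (N : ℝ)
        ≤ 2 * K * (sy * Real.log (N : ℝ))
          + 6 / (k * Real.log 6) * (sy * Real.log (N : ℝ)) := by
          rw [hMdef]; linarith [h6]
      _ = (2 * K + 6 / (k * Real.log 6)) * (sy * Real.log (N : ℝ)) := by ring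
  have step3 : ∫ p in R2, 6 * C0 * (ε⁻¹ * ε⁻¹) * Real.exp (-β * (1 - p.1) / ε)
      ≤ 6 * C0 * (ε⁻¹ * ε⁻¹) * (ε / β * (N : ℝ) ^ (-(5 / 2 : ℝ)))
        * ((2 * K + 6 / (k * Real.log 6)) * (sy * Real.log (N : ℝ))) := by
    rw [hprod]
    have hx1 : ∫ x in Icc (0 : ℝ) (1 - lx), 6 * C0 * (ε⁻¹ * ε⁻¹) * Real.exp (-β * (1 - x) / ε)
        = 6 * C0 * (ε⁻¹ * ε⁻¹) * ∫ x in Icc (0 : ℝ) (1 - lx), Real.exp (-β * (1 - x) / ε) :=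
      integral_const_mul _ _
    rw [hx1]
    apply mul_le_mul
    · exact mul_le_mul_of_nonneg_left hIxle (by positivity)
    · exact hIyle.trans hsyL
    · exact hIy0
    · positivity
  have hfinal : 6 * C0 * (ε⁻¹ * ε⁻¹) * (ε / β * (N : ℝ) ^ (-(5 / 2 : ℝ)))
        * ((2 * K + 6 / (k * Real.log 6)) * (sy * Real.log (N : ℝ)))
      = 6 * C0 / β * (2 * K + 6 / (k * Real.log 6)) * ε⁻¹
        * (N : ℝ) ^ (-(5 / 2 : ℝ)) * sy * Real.log (N : ℝ) := by
    field_simp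
  linarith [step1, step2, step3, hfinal.le, hfinal.ge]
end
end
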